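/- arXiv:0911.4899 — 8 statements merged into one kernel-verified Lean document; each statement's English description precedes it below -/
import Mathlib

section
/- Let β, β̂ ∈ ℝ^p, S = spt(β), d = β̂ − β, and suppose constants c₁, c₂, n > 0 satisfy c₂ n ‖d‖₂² ≤ 2 c₁ √n (‖d‖₁ + ‖β‖₁ − ‖β̂‖₁). Then ‖d‖₂ ≤ (4c₁/c₂) √(|S|/n). -/
/-- Deterministic core of Proposition 2.1. -/
theorem stmt2 {p : ℕ} (β βh : Fin p → ℝ) (c₁ c₂ n : ℝ)
    (hc₁ : 0 < c₁) (hc₂ : 0 < c₂) (hn : 0 < n)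
    (h : c₂ * n * (∑ i, (βh i - β i) ^ 2) ≤
        2 * c₁ * Real.sqrt n * ((∑ i, |βh i - β i|) + (∑ i, |β i|) - ∑ i, |βh i|)) :
    Real.sqrt (∑ i, (βh i - β i) ^ 2) ≤
      (4 * c₁ / c₂) * Real.sqrt (({i | β i ≠ 0} : Set (Fin p)).ncard / n) := by
  set S : Finset (Fin p) := Finset.univ.filter (fun i => β i ≠ 0) with hS
  have hcard : ({i | β i ≠ 0} : Set (Fin p)).ncard = S.card := by
    rw [Set.ncard_eq_toFinset_card']
    congr 1
    ext i
    simp [hS]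
  have hsum2 : (0:ℝ) ≤ ∑ i, (βh i - β i) ^ 2 :=
    Finset.sum_nonneg (fun i _ => sq_nonneg _)
  set D := Real.sqrt (∑ i, (βh i - β i) ^ 2) with hD
  have hD0 : 0 ≤ D := Real.sqrt_nonneg _
  have hD2 : D ^ 2 = ∑ i, (βh i - β i) ^ 2 := Real.sq_sqrt hsum2
  -- pointwise bound
  have h1 : (∑ i, |βh i - β i|) + (∑ i, |β i|) - ∑ i, |βh i| ≤
      2 * ∑ i ∈ S, |βh i - β i| := by
    have : (∑ i, |βh i - β i|) + (∑ i, |β i|) - ∑ i, |βh i| =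
        ∑ i, (|βh i - β i| + |β i| - |βh i|) := by
      rw [Finset.sum_sub_distrib, Finset.sum_add_distrib]
    rw [this, Finset.mul_sum, Finset.sum_filter]
    apply Finset.sum_le_sum
    intro i _
    by_cases hb : β i = 0
    · simp [hb]
    · simp only [hb, if_pos, ne_eq, not_false_eq_true, if_true]
      have : |β i| - |βh i| ≤ |βh i - β i| := by
        have := abs_sub_abs_le_abs_sub (β i) (βh i)
        rw [abs_sub_comm] at this
        linarith
      linarith
  -- Cauchy-Schwarz
  have h2 : ∑ i ∈ S, |βh i - β i| ≤ Real.sqrt S.card * D := by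
    have hcs : (∑ i ∈ S, |βh i - β i|) ^ 2 ≤ S.card * ∑ i ∈ S, |βh i - β i| ^ 2 :=
      sq_sum_le_card_mul_sum_sq
    have hle : ∑ i ∈ S, |βh i - β i| ^ 2 ≤ ∑ i, (βh i - β i) ^ 2 := by
      apply Finset.sum_le_sum_of_subset_of_nonneg (Finset.subset_univ S)
        (fun i _ _ => sq_nonneg _)
      |>.trans_eq' (by simp [sq_abs])
    have hnn : 0 ≤ ∑ i ∈ S, |βh i - β i| :=
      Finset.sum_nonneg (fun i _ => abs_nonneg _)
    calc ∑ i ∈ S, |βh i - β i|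
        = Real.sqrt ((∑ i ∈ S, |βh i - β i|) ^ 2) := (Real.sqrt_sq hnn).symm
      _ ≤ Real.sqrt (S.card * ∑ i, (βh i - β i) ^ 2) := by
          apply Real.sqrt_le_sqrt
          calc (∑ i ∈ S, |βh i - β i|) ^ 2 ≤ S.card * ∑ i ∈ S, |βh i - β i| ^ 2 := hcs
            _ ≤ S.card * ∑ i, (βh i - β i) ^ 2 := by
                apply mul_le_mul_of_nonneg_left hle (Nat.cast_nonneg _)
      _ = Real.sqrt S.card * D := by rw [Real.sqrt_mul (Nat.cast_nonneg _)]
  -- combine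
  have hn' : 0 ≤ Real.sqrt n := Real.sqrt_nonneg _
  have key : c₂ * n * D ^ 2 ≤ 4 * c₁ * Real.sqrt n * (Real.sqrt S.card * D) := by
    rw [hD2]
    calc c₂ * n * (∑ i, (βh i - β i) ^ 2)
        ≤ 2 * c₁ * Real.sqrt n * ((∑ i, |βh i - β i|) + (∑ i, |β i|) - ∑ i, |βh i|) := h
      _ ≤ 2 * c₁ * Real.sqrt n * (2 * ∑ i ∈ S, |βh i - β i|) := by
          apply mul_le_mul_of_nonneg_left h1 (by positivity)
      _ ≤ 2 * c₁ * Real.sqrt n * (2 * (Real.sqrt S.card * D)) := by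
          apply mul_le_mul_of_nonneg_left (by linarith) (by positivity)
      _ = 4 * c₁ * Real.sqrt n * (Real.sqrt S.card * D) := by ring
  rw [hcard, Real.sqrt_div (Nat.cast_nonneg _), div_mul_div_comm]
  have hsn : 0 < Real.sqrt n := Real.sqrt_pos.2 hn
  have hnsq : Real.sqrt n * Real.sqrt n = n := Real.mul_self_sqrt hn.le
  have hsc : 0 ≤ Real.sqrt (S.card : ℝ) := Real.sqrt_nonneg _
  rcases eq_or_lt_of_le hD0 with h0 | h0
  · rw [← h0]; positivity
  · rw [le_div_iff₀ (by positivity)]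
    have key2 : c₂ * Real.sqrt n * D ≤ 4 * c₁ * Real.sqrt (S.card : ℝ) := by
      have h3 : c₂ * Real.sqrt n * D * (Real.sqrt n * D) ≤
          4 * c₁ * Real.sqrt (S.card : ℝ) * (Real.sqrt n * D) := by
        calc c₂ * Real.sqrt n * D * (Real.sqrt n * D) = c₂ * (Real.sqrt n * Real.sqrt n) * D ^ 2 := by
              ring
          _ = c₂ * n * D ^ 2 := by rw [hnsq]
          _ ≤ 4 * c₁ * Real.sqrt n * (Real.sqrt (S.card : ℝ) * D) := key
          _ = 4 * c₁ * Real.sqrt (S.card : ℝ) * (Real.sqrt n * D) := by ring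
      exact le_of_mul_le_mul_right h3 (mul_pos hsn h0)
    linarith [key2, mul_comm D (c₂ * Real.sqrt n)]
end

section
/- Let X ∈ ℝ^{n×p} have nonzero columns V₁,…,V_p, and define μ_X = max_{i<j} |V_iᵀV_j|/(‖V_i‖₂‖V_j‖₂), a_X = min_i ‖V_i‖₂²/n, b_X = max_i ‖V_i‖₂²/n. Then for any d ∈ ℝ^p supported on a set S, ‖X d‖₂² ≥ (a_X + b_X μ_X) n ‖d_S‖₂² − b_X μ_X n ‖d_S‖₁². -/
/-- Quadratic lower bound: `‖Xd‖₂² ≥ (a_X + b_X μ_X) n ‖d_S‖₂² − b_X μ_X n ‖d_S‖₁²`. -/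
theorem stmt4 {n p : ℕ} (X : Matrix (Fin n) (Fin p) ℝ)
    (hV : ∀ j, (fun k => X k j) ≠ 0)
    (a b μ : ℝ) (ha : 0 < a) (hb : 0 < b) (hμ0 : 0 ≤ μ)
    (haX : ∀ j, a * n ≤ ∑ k, X k j ^ 2)
    (hbX : ∀ j, (∑ k, X k j ^ 2) ≤ b * n)
    (hμ : ∀ i j : Fin p, i ≠ j →
      |∑ k, X k i * X k j| ≤
        μ * (Real.sqrt (∑ k, X k i ^ 2) * Real.sqrt (∑ k, X k j ^ 2)))
    (S : Finset (Fin p)) (d : Fin p → ℝ) (hd : ∀ i ∉ S, d i = 0) :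
    (a + b * μ) * n * (∑ i, d i ^ 2) - b * μ * n * (∑ i, |d i|) ^ 2 ≤
      ∑ k, (∑ i, d i * X k i) ^ 2 := by
  classical
  have hbn : (0:ℝ) ≤ b * n := by positivity
  -- expand the quadratic form
  have key : ∑ k, (∑ i, d i * X k i) ^ 2
      = ∑ i, ∑ j, d i * d j * ∑ k, X k i * X k j := by
    have : ∀ k, (∑ i, d i * X k i) ^ 2
        = ∑ i, ∑ j, (d i * X k i) * (d j * X k j) := by
      intro k
      rw [sq, Finset.sum_mul_sum]
    simp_rw [this]
    rw [Finset.sum_comm]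
    refine Finset.sum_congr rfl fun i _ => ?_
    rw [Finset.sum_comm]
    refine Finset.sum_congr rfl fun j _ => ?_
    rw [Finset.mul_sum]
    refine Finset.sum_congr rfl fun k _ => by ring
  -- split diagonal and off-diagonal
  have split : ∀ i : Fin p, (∑ j, d i * d j * ∑ k, X k i * X k j)
      = d i ^ 2 * (∑ k, X k i ^ 2)
        + ∑ j ∈ Finset.univ.erase i, d i * d j * ∑ k, X k i * X k j := by
    intro i
    rw [← Finset.add_sum_erase _ _ (Finset.mem_univ i)]
    congr 1
    simp_rw [sq]
  -- off-diagonal lower bound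
  have off : ∀ i : Fin p, ∀ j ∈ Finset.univ.erase i,
      -(b * μ * n * (|d i| * |d j|)) ≤ d i * d j * ∑ k, X k i * X k j := by
    intro i j hj
    have hij : i ≠ j := (Finset.ne_of_mem_erase hj).symm
    have h1 := hμ i j hij
    have hsi : Real.sqrt (∑ k, X k i ^ 2) ≤ Real.sqrt (b * n) :=
      Real.sqrt_le_sqrt (hbX i)
    have hsj : Real.sqrt (∑ k, X k j ^ 2) ≤ Real.sqrt (b * n) :=
      Real.sqrt_le_sqrt (hbX j)
    have hs0i : 0 ≤ Real.sqrt (∑ k, X k i ^ 2) := Real.sqrt_nonneg _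
    have hs0j : 0 ≤ Real.sqrt (∑ k, X k j ^ 2) := Real.sqrt_nonneg _
    have hprod : Real.sqrt (∑ k, X k i ^ 2) * Real.sqrt (∑ k, X k j ^ 2)
        ≤ b * n := by
      calc Real.sqrt (∑ k, X k i ^ 2) * Real.sqrt (∑ k, X k j ^ 2)
          ≤ Real.sqrt (b * n) * Real.sqrt (b * n) :=
            mul_le_mul hsi hsj hs0j (Real.sqrt_nonneg _)
        _ = b * n := Real.mul_self_sqrt hbn
    have h2 : |∑ k, X k i * X k j| ≤ μ * (b * n) :=
      h1.trans (by
        exact mul_le_mul_of_nonneg_left hprod hμ0)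
    have h3 : |d i * d j * ∑ k, X k i * X k j| ≤ |d i| * |d j| * (μ * (b * n)) := by
      rw [abs_mul, abs_mul]
      exact mul_le_mul_of_nonneg_left h2 (by positivity)
    have := neg_abs_le (d i * d j * ∑ k, X k i * X k j)
    nlinarith [abs_nonneg (d i), abs_nonneg (d j)]
  have hoff : ∑ i, ∑ j ∈ Finset.univ.erase i, -(b * μ * n * (|d i| * |d j|))
      ≤ ∑ i, ∑ j ∈ Finset.univ.erase i, d i * d j * ∑ k, X k i * X k j :=
    Finset.sum_le_sum fun i _ => Finset.sum_le_sum (off i)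
  -- diagonal lower bound
  have hdiag : ∑ i, d i ^ 2 * (a * n) ≤ ∑ i, d i ^ 2 * (∑ k, X k i ^ 2) :=
    Finset.sum_le_sum fun i _ => mul_le_mul_of_nonneg_left (haX i) (sq_nonneg _)
  -- ℓ₁/ℓ₂ identity
  have hl1 : (∑ i, |d i|) ^ 2
      = ∑ i, d i ^ 2 + ∑ i, ∑ j ∈ Finset.univ.erase i, |d i| * |d j| := by
    rw [sq, Finset.sum_mul_sum]
    rw [← Finset.sum_add_distrib]
    refine Finset.sum_congr rfl fun i _ => ?_
    rw [← Finset.add_sum_erase _ _ (Finset.mem_univ i)]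
    congr 1
    rw [← abs_mul, ← sq, abs_sq]
  -- put things together
  rw [key]
  have expand : ∑ i, ∑ j, d i * d j * ∑ k, X k i * X k j
      = ∑ i, d i ^ 2 * (∑ k, X k i ^ 2)
        + ∑ i, ∑ j ∈ Finset.univ.erase i, d i * d j * ∑ k, X k i * X k j := by
    rw [← Finset.sum_add_distrib]
    exact Finset.sum_congr rfl fun i _ => split i
  rw [expand]
  have hs1 : ∑ i, ∑ j ∈ Finset.univ.erase i, -(b * μ * n * (|d i| * |d j|))
      = -(b * μ * n * ((∑ i, |d i|) ^ 2 - ∑ i, d i ^ 2)) := by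
    have hneg : ∑ i, ∑ j ∈ Finset.univ.erase i, -(b * μ * (n:ℝ) * (|d i| * |d j|))
        = -(b * μ * n * ∑ i, ∑ j ∈ Finset.univ.erase i, |d i| * |d j|) := by
      rw [Finset.mul_sum, ← Finset.sum_neg_distrib]
      refine Finset.sum_congr rfl fun i _ => ?_
      rw [Finset.mul_sum, ← Finset.sum_neg_distrib]
    rw [hneg]
    have h2 : ∑ i, ∑ j ∈ Finset.univ.erase i, |d i| * |d j|
        = (∑ i, |d i|) ^ 2 - ∑ i, d i ^ 2 := by linarith [hl1]
    rw [h2]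
  have hs2 : ∑ i, d i ^ 2 * (a * n) = a * n * ∑ i, d i ^ 2 := by
    rw [Finset.mul_sum]; exact Finset.sum_congr rfl fun i _ => by ring
  rw [hs1] at hoff
  nlinarith [hoff, hdiag]
end

section
/- (Lemma on the ℓ₁-norm bound.) Let a, b, μ, τ, c̃, n > 0 and let S be a finite index set with a + bμ > bμ(3 + 4τ)|S|. Suppose vectors d_S (supported on S) and v_{Sᶜ} (supported on Sᶜ) satisfy: (i) ‖v_{Sᶜ}‖₁ ≤ (1+2τ)‖d_S‖₁, and (ii) (a + bμ) n ‖d_S‖₂² ≤ bμ n ‖d_S‖₁² + 2 c̃ (2+1/τ) √n ‖d_S‖₁ + 2(bμ √n ‖d_S‖₁ − c̃/τ) √n ‖v_{Sᶜ}‖₁. Then bμ √n ‖d_S‖₁ < c̃/τ. -/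
/-- Lemma 2.1 (ℓ₁-norm bound): under the gap condition and the cone condition,
`b μ √n ‖d_S‖₁ < c̃/τ`. -/
theorem stmt6 {p : ℕ} (a b μ τ ct n : ℝ)
    (ha : 0 < a) (hb : 0 < b) (hμ : 0 < μ) (hτ : 0 < τ) (hct : 0 < ct) (hn : 0 < n)
    (S : Finset (Fin p)) (dS vSc : Fin p → ℝ)
    (hdS : ∀ i ∉ S, dS i = 0) (hvSc : ∀ i ∈ S, vSc i = 0)
    (hgap : b * μ * (3 + 4 * τ) * S.card < a + b * μ)
    (h1 : (∑ i, |vSc i|) ≤ (1 + 2 * τ) * ∑ i, |dS i|)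
    (h2 : (a + b * μ) * n * (∑ i, dS i ^ 2) ≤
        b * μ * n * (∑ i, |dS i|) ^ 2
          + 2 * ct * (2 + 1 / τ) * Real.sqrt n * (∑ i, |dS i|)
          + 2 * (b * μ * Real.sqrt n * (∑ i, |dS i|) - ct / τ)
              * Real.sqrt n * (∑ i, |vSc i|)) :
    b * μ * Real.sqrt n * (∑ i, |dS i|) < ct / τ := by
  by_contra hcon
  push_neg at hcon
  set L1 := ∑ i, |dS i| with hL1def
  set L2 := ∑ i, dS i ^ 2 with hL2def
  set V := ∑ i, |vSc i| with hVdef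
  clear_value L1 L2 V
  have hs : Real.sqrt n * Real.sqrt n = n := Real.mul_self_sqrt hn.le
  have hsq : 0 < Real.sqrt n := Real.sqrt_pos.2 hn
  have hL1nn : 0 ≤ L1 := hL1def ▸ Finset.sum_nonneg fun i _ => abs_nonneg _
  have hL1pos : 0 < L1 := by
    rcases hL1nn.lt_or_eq with h | h
    · exact h
    · exfalso
      rw [← h, mul_zero] at hcon
      exact absurd hcon (not_le.2 (div_pos hct hτ))
  -- Cauchy-Schwarz
  have e1 : ∑ i ∈ S, |dS i| = L1 := hL1def ▸
    Finset.sum_subset S.subset_univ (fun i _ hi => by simp [hdS i hi])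
  have e2 : ∑ i ∈ S, dS i ^ 2 = L2 := hL2def ▸
    Finset.sum_subset S.subset_univ (fun i _ hi => by simp [hdS i hi])
  have hcs : L1 ^ 2 ≤ (S.card : ℝ) * L2 := by
    rw [← e1, ← e2]
    have := Finset.sum_mul_sq_le_sq_mul_sq S (fun _ => (1 : ℝ)) (fun i => |dS i|)
    simp only [one_pow, one_mul, sq_abs] at this
    simpa [Finset.sum_const, nsmul_eq_mul] using this
  have hVnn : 0 ≤ V := hVdef ▸ Finset.sum_nonneg fun i _ => abs_nonneg _
  have hfac : 0 ≤ b * μ * Real.sqrt n * L1 - ct / τ := by linarith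
  have hbound : 2 * (b * μ * Real.sqrt n * L1 - ct / τ) * Real.sqrt n * V ≤
      2 * (b * μ * Real.sqrt n * L1 - ct / τ) * Real.sqrt n * ((1 + 2 * τ) * L1) := by
    apply mul_le_mul_of_nonneg_left h1
    positivity
  have e : 2 * (b * μ * Real.sqrt n * L1 - ct / τ) * Real.sqrt n * ((1 + 2 * τ) * L1)
      = b * μ * (2 + 4 * τ) * n * L1 ^ 2 - 2 * ct * (2 + 1 / τ) * Real.sqrt n * L1 := by
    have hτ1 : τ * τ⁻¹ = 1 := mul_inv_cancel₀ hτ.ne'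
    linear_combination (2 * (1 + 2 * τ) * b * μ * L1 ^ 2) * hs -
      (4 * Real.sqrt n * L1 * ct) * hτ1
  have hkey : (a + b * μ) * n * L2 ≤ b * μ * (3 + 4 * τ) * n * L1 ^ 2 := by
    linarith [h2, hbound, e]
  have hL2nn : 0 ≤ L2 := hL2def ▸ Finset.sum_nonneg fun i _ => sq_nonneg _
  have hcardL2 : 0 < (S.card : ℝ) * L2 := lt_of_lt_of_le (pow_pos hL1pos 2) hcs
  have hL2pos : 0 < L2 := by nlinarith [Nat.cast_nonneg S.card (α := ℝ)]
  have h3 : b * μ * (3 + 4 * τ) * n * L1 ^ 2 ≤ b * μ * (3 + 4 * τ) * n * ((S.card : ℝ) * L2) := by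
    have hnn : 0 ≤ b * μ * (3 + 4 * τ) * n := by positivity
    exact mul_le_mul_of_nonneg_left hcs hnn
  have h4 : b * μ * (3 + 4 * τ) * (S.card : ℝ) * (n * L2) < (a + b * μ) * (n * L2) :=
    mul_lt_mul_of_pos_right hgap (mul_pos hn hL2pos)
  linarith [hkey, h3, h4]
end

section
/- Let d ∈ ℝ^p, let T ⊆ {1,…,p} with |T| = s ≥ 1, and let S₁ be the union of T with the set of the s indices i ∉ T having the largest values of |d_i|. Then ‖d‖₂² ≤ ‖d_{S₁}‖₂² + ‖d_{Tᶜ}‖₁²/s. -/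
/-- Candès–Tao Lemma 3.1: with `S₁` the union of `T` and the `s` largest-magnitude
coordinates of `d` outside `T`, `‖d‖₂² ≤ ‖d_{S₁}‖₂² + ‖d_{Tᶜ}‖₁²/s`. -/
theorem stmt7 {p : ℕ} (d : Fin p → ℝ) (T S₁ : Finset (Fin p)) (s : ℕ) (hs : 1 ≤ s)
    (hT : T.card = s) (hTS : T ⊆ S₁) (hcard : (S₁ \ T).card = s)
    (hmax : ∀ i ∈ S₁ \ T, ∀ j ∉ S₁, |d j| ≤ |d i|) :
    (∑ i, d i ^ 2) ≤ (∑ i ∈ S₁, d i ^ 2) + (∑ i ∈ Tᶜ, |d i|) ^ 2 / s := by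
  set A : ℝ := ∑ i ∈ Tᶜ, |d i| with hA
  have hApos : 0 ≤ A := Finset.sum_nonneg fun i _ => abs_nonneg _
  have hspos : (0:ℝ) < s := by exact_mod_cast hs
  have hsub : S₁ᶜ ⊆ Tᶜ := Finset.compl_subset_compl.mpr hTS
  -- key bound: for j ∉ S₁, |d j| ≤ A / s
  have key : ∀ j ∈ S₁ᶜ, |d j| ≤ A / s := by
    intro j hj
    rw [Finset.mem_compl] at hj
    rw [le_div_iff₀ hspos]
    have h1 : |d j| * s = ∑ _i ∈ S₁ \ T, |d j| := by
      rw [Finset.sum_const, hcard, nsmul_eq_mul, mul_comm]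
    rw [h1]
    have h2 : (∑ i ∈ S₁ \ T, |d j|) ≤ ∑ i ∈ S₁ \ T, |d i| :=
      Finset.sum_le_sum fun i hi => hmax i hi j hj
    refine h2.trans (Finset.sum_le_sum_of_subset_of_nonneg ?_ fun i _ _ => abs_nonneg _)
    intro i hi
    rw [Finset.mem_sdiff] at hi
    rw [Finset.mem_compl]
    exact hi.2
  have hsplit : (∑ i, d i ^ 2) = (∑ i ∈ S₁, d i ^ 2) + ∑ i ∈ S₁ᶜ, d i ^ 2 :=
    (Finset.sum_add_sum_compl S₁ _).symm
  rw [hsplit]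
  gcongr
  calc (∑ i ∈ S₁ᶜ, d i ^ 2) ≤ ∑ i ∈ S₁ᶜ, (A / s) * |d i| := by
        refine Finset.sum_le_sum fun i hi => ?_
        have : d i ^ 2 = |d i| * |d i| := by rw [← sq_abs]; ring
        rw [this]
        exact mul_le_mul_of_nonneg_right (key i hi) (abs_nonneg _)
    _ = (A / s) * ∑ i ∈ S₁ᶜ, |d i| := by rw [Finset.mul_sum]
    _ ≤ (A / s) * A := by
        refine mul_le_mul_of_nonneg_left ?_ (div_nonneg hApos hspos.le)
        exact Finset.sum_le_sum_of_subset_of_nonneg hsub fun i _ _ => abs_nonneg _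
    _ = A ^ 2 / s := by ring
end

section
/- Let d ∈ ℝ^p, T = spt(β) for some β with |T| = s ≥ 1, let τ > 0, and let S₁ be T together with the s largest-magnitude coordinates of d outside T. If ‖d_{Tᶜ}‖₁ ≤ (1+2τ)‖d_T‖₁, then ‖d‖₂² ≤ ‖d_{S₁}‖₂² + (1+2τ)² ‖d_T‖₂². -/
/-- Combining the Candès–Tao inequality with the cone condition:
`‖d‖₂² ≤ ‖d_{S₁}‖₂² + (1+2τ)² ‖d_T‖₂²`. -/
theorem stmt8 {p : ℕ} (β d : Fin p → ℝ) (τ : ℝ) (hτ : 0 < τ)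
    (T S₁ : Finset (Fin p)) (s : ℕ) (hs : 1 ≤ s)
    (hT : ∀ i, β i ≠ 0 ↔ i ∈ T) (hTcard : T.card = s)
    (hTS : T ⊆ S₁) (hcard : (S₁ \ T).card = s)
    (hmax : ∀ i ∈ S₁ \ T, ∀ j ∉ S₁, |d j| ≤ |d i|)
    (hcone : (∑ i ∈ Tᶜ, |d i|) ≤ (1 + 2 * τ) * ∑ i ∈ T, |d i|) :
    (∑ i, d i ^ 2) ≤ (∑ i ∈ S₁, d i ^ 2) + (1 + 2 * τ) ^ 2 * ∑ i ∈ T, d i ^ 2 := by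
  have hspos : (0:ℝ) < s := by exact_mod_cast hs
  set N := ∑ i ∈ Tᶜ, |d i| with hN
  have hNnonneg : 0 ≤ N := Finset.sum_nonneg fun i _ => abs_nonneg _
  -- split the whole sum
  have hsplit : (∑ i, d i ^ 2) = (∑ i ∈ S₁, d i ^ 2) + ∑ i ∈ S₁ᶜ, d i ^ 2 := by
    rw [Finset.sum_add_sum_compl]
  rw [hsplit]
  have key : (∑ i ∈ S₁ᶜ, d i ^ 2) ≤ (1 + 2 * τ) ^ 2 * ∑ i ∈ T, d i ^ 2 := by
    -- each |d j| for j ∉ S₁ is at most (1/s) * ∑_{S₁\T} |d i|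
    have hbound : ∀ j ∈ S₁ᶜ, (s:ℝ) * |d j| ≤ ∑ i ∈ S₁ \ T, |d i| := by
      intro j hj
      rw [Finset.mem_compl] at hj
      calc (s:ℝ) * |d j| = ∑ _i ∈ S₁ \ T, |d j| := by
            rw [Finset.sum_const, hcard, nsmul_eq_mul]
        _ ≤ ∑ i ∈ S₁ \ T, |d i| := Finset.sum_le_sum fun i hi => hmax i hi j hj
    have hST : (∑ i ∈ S₁ \ T, |d i|) ≤ N := by
      apply Finset.sum_le_sum_of_subset_of_nonneg
      · intro i hi
        rw [Finset.mem_sdiff] at hi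
        exact Finset.mem_compl.2 hi.2
      · intro i _ _; exact abs_nonneg _
    have hSc : (∑ j ∈ S₁ᶜ, |d j|) ≤ N := by
      apply Finset.sum_le_sum_of_subset_of_nonneg
      · exact Finset.compl_subset_compl.2 hTS
      · intro i _ _; exact abs_nonneg _
    have h1 : (∑ j ∈ S₁ᶜ, d j ^ 2) ≤ (∑ j ∈ S₁ᶜ, |d j|) * ((∑ i ∈ S₁ \ T, |d i|) / s) := by
      rw [Finset.sum_mul]
      apply Finset.sum_le_sum
      intro j hj
      have := hbound j hj
      have hdj : 0 ≤ |d j| := abs_nonneg _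
      have : |d j| ≤ (∑ i ∈ S₁ \ T, |d i|) / s := by
        rw [le_div_iff₀ hspos]; linarith [hbound j hj]
      calc d j ^ 2 = |d j| * |d j| := by rw [← abs_mul, ← sq, abs_sq]
        _ ≤ |d j| * ((∑ i ∈ S₁ \ T, |d i|) / s) := by
            exact mul_le_mul_of_nonneg_left this hdj
    have h2 : (∑ j ∈ S₁ᶜ, |d j|) * ((∑ i ∈ S₁ \ T, |d i|) / s) ≤ N * (N / s) := by
      apply mul_le_mul hSc _ _ hNnonneg
      · exact div_le_div_of_nonneg_right hST hspos.le
      · positivity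
    have hcs : (∑ i ∈ T, |d i|) ^ 2 ≤ (s:ℝ) * ∑ i ∈ T, d i ^ 2 := by
      have := sq_sum_le_card_mul_sum_sq (s := T) (f := fun i => |d i|)
      simp only [hTcard] at this
      calc (∑ i ∈ T, |d i|) ^ 2 ≤ (s:ℝ) * ∑ i ∈ T, |d i| ^ 2 := by exact_mod_cast this
        _ = (s:ℝ) * ∑ i ∈ T, d i ^ 2 := by simp [sq_abs]
    have hτ' : 0 ≤ 1 + 2 * τ := by linarith
    have hN2 : N ^ 2 ≤ (1 + 2 * τ) ^ 2 * (∑ i ∈ T, |d i|) ^ 2 := by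
      rw [← mul_pow]
      exact pow_le_pow_left₀ hNnonneg hcone 2
    calc (∑ j ∈ S₁ᶜ, d j ^ 2) ≤ N * (N / s) := le_trans h1 h2
      _ = N ^ 2 / s := by ring
      _ ≤ (1 + 2 * τ) ^ 2 * (∑ i ∈ T, |d i|) ^ 2 / s := by
          apply div_le_div_of_nonneg_right hN2 hspos.le
      _ ≤ (1 + 2 * τ) ^ 2 * ((s:ℝ) * ∑ i ∈ T, d i ^ 2) / s := by
          apply div_le_div_of_nonneg_right _ hspos.le
          exact mul_le_mul_of_nonneg_left hcs (by positivity)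
      _ = (1 + 2 * τ) ^ 2 * ∑ i ∈ T, d i ^ 2 := by
          field_simp
  linarith
end

section
/- Proposition 2.1: Let n, p ∈ ℕ with n ≥ 1, let D ⊆ ℝ^p, β ∈ ℝ^p with S = spt(β), and constants c₁, c₂ > 0, q ∈ (0,1), c₀ > 0. Suppose: (H1) with probability at least 1 − c₀q, |⟨ε, φ(Xv) − φ(Xβ)⟩| ≤ c₁√n ‖v − β‖₁ for all v ∈ D; (H2) G(ψ(Xv) − ψ(Xβ)) ≥ c₂ n ‖v − β‖₂² for all v ∈ D. Let c_r = 2c₁√n and κ_r = 4c₁/c₂. If β̂ ∈ D almost surely satisfies G(ψ(Xβ̂) − ψ(Xβ)) ≤ 2|⟨ε, φ(Xβ̂) − φ(Xβ)⟩| − c_r(‖β̂‖₁ − ‖β‖₁), then P(‖β̂ − β‖₂ ≤ κ_r √(|S|/n)) ≥ 1 − c₀q. -/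
open MeasureTheory

/-- Proposition 2.1: under (H1) and (H2), the ℓ₁-regularized estimator satisfies
`‖β̂ − β‖₂ ≤ (4c₁/c₂)√(|spt β|/n)` with probability at least `1 − c₀q`. -/
theorem stmt9 {Ω : Type*} [MeasurableSpace Ω] (ℙ : Measure Ω) [IsProbabilityMeasure ℙ]
    {n p : ℕ} (hn : 1 ≤ n) (X : Matrix (Fin n) (Fin p) ℝ)
    (D : Set (Fin p → ℝ)) (β : Fin p → ℝ)
    (G : (Fin n → ℝ) → ℝ) (ψ φ : Fin n → ℝ → ℝ)
    (ε : Ω → Fin n → ℝ) (βh : Ω → Fin p → ℝ)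
    (c₁ c₂ q c₀ : ℝ) (hc₁ : 0 < c₁) (hc₂ : 0 < c₂)
    (hq : 0 < q) (hq1 : q < 1) (hc₀ : 0 < c₀)
    (hH1 : ENNReal.ofReal (1 - c₀ * q) ≤
      ℙ {ω | ∀ v ∈ D,
        |∑ k, ε ω k * (φ k (X.mulVec v k) - φ k (X.mulVec β k))| ≤
          c₁ * Real.sqrt n * ∑ i, |v i - β i|})
    (hH2 : ∀ v ∈ D, c₂ * n * (∑ i, (v i - β i) ^ 2) ≤
      G (fun k => ψ k (X.mulVec v k) - ψ k (X.mulVec β k)))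
    (hβh : ∀ᵐ ω ∂ℙ, βh ω ∈ D ∧
      G (fun k => ψ k (X.mulVec (βh ω) k) - ψ k (X.mulVec β k)) ≤
        2 * |∑ k, ε ω k * (φ k (X.mulVec (βh ω) k) - φ k (X.mulVec β k))|
          - (2 * c₁ * Real.sqrt n) * ((∑ i, |βh ω i|) - ∑ i, |β i|)) :
    ENNReal.ofReal (1 - c₀ * q) ≤
      ℙ {ω | Real.sqrt (∑ i, (βh ω i - β i) ^ 2) ≤
        (4 * c₁ / c₂) * Real.sqrt (({i | β i ≠ 0} : Set (Fin p)).ncard / n)} := by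
  refine hH1.trans (measure_mono_ae ?_)
  filter_upwards [hβh] with ω hω hω1
  obtain ⟨hmem, hG⟩ := hω
  set v := βh ω with hv
  have h1 := hω1 v hmem
  have h2 := hH2 v hmem
  have hn0 : (0:ℝ) < (n:ℝ) := by exact_mod_cast hn
  set r := Real.sqrt n with hr
  have hrpos : 0 < r := Real.sqrt_pos.mpr hn0
  set a := ∑ i, (v i - β i)^2 with haa
  have ha : 0 ≤ a := Finset.sum_nonneg fun i _ => sq_nonneg _
  set s := Real.sqrt a with hs
  have hsnn : 0 ≤ s := Real.sqrt_nonneg _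
  set sF := Finset.univ.filter (fun i : Fin p => β i ≠ 0) with hsF
  have hcard : (({i | β i ≠ 0} : Set (Fin p)).ncard : ℝ) = (sF.card : ℝ) := by
    congr 1
    rw [Set.ncard_eq_toFinset_card']
    congr 1
    ext i
    simp [hsF]
  set t := Real.sqrt (sF.card) with ht
  have htnn : 0 ≤ t := Real.sqrt_nonneg _
  -- step 1 : chain H2 ≤ G ≤ ...
  have step1 : c₂ * n * a ≤ 2 * c₁ * r *
      ((∑ i, |v i - β i|) - ((∑ i, |v i|) - ∑ i, |β i|)) := by
    have hch := h2.trans hG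
    nlinarith [h1]
  -- step 2 : l1 compressibility
  have step2 : (∑ i, |v i - β i|) - ((∑ i, |v i|) - (∑ i, |β i|))
      ≤ 2 * ∑ i ∈ sF, |v i - β i| := by
    have hrw : (∑ i, |v i - β i|) - ((∑ i, |v i|) - (∑ i, |β i|))
        = ∑ i, (|v i - β i| - |v i| + |β i|) := by
      rw [Finset.sum_add_distrib, Finset.sum_sub_distrib]; ring
    rw [hrw]
    have hzero : ∑ i, (|v i - β i| - |v i| + |β i|)
        = ∑ i ∈ sF, (|v i - β i| - |v i| + |β i|) := by
      refine (Finset.sum_subset (Finset.subset_univ sF) ?_).symm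
      intro i _ hi
      have hb : β i = 0 := by
        by_contra h
        exact hi (Finset.mem_filter.mpr ⟨Finset.mem_univ i, h⟩)
      simp [hb]
    rw [hzero, Finset.mul_sum]
    refine Finset.sum_le_sum fun i _ => ?_
    have h3 : |β i| - |v i| ≤ |β i - v i| := abs_sub_abs_le_abs_sub _ _
    have h4 : |β i - v i| = |v i - β i| := abs_sub_comm _ _
    linarith
  -- step 3 : Cauchy-Schwarz
  have step3 : ∑ i ∈ sF, |v i - β i| ≤ t * s := by
    have hsum_nn : 0 ≤ ∑ i ∈ sF, |v i - β i| :=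
      Finset.sum_nonneg fun i _ => abs_nonneg _
    refine le_of_pow_le_pow_left₀ (two_ne_zero) (mul_nonneg htnn hsnn) ?_
    have hcs2 : (∑ i ∈ sF, |v i - β i|)^2 ≤ (sF.card : ℝ) * ∑ i ∈ sF, (v i - β i)^2 := by
      have := Finset.sum_mul_sq_le_sq_mul_sq sF (fun _ => (1:ℝ)) (fun i => |v i - β i|)
      simpa [sq_abs] using this
    have hle : (∑ i ∈ sF, (v i - β i)^2) ≤ a := by
      refine Finset.sum_le_sum_of_subset_of_nonneg (Finset.subset_univ sF) ?_
      intro i _ _; exact sq_nonneg _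
    have hts : (t * s)^2 = (sF.card : ℝ) * a := by
      rw [mul_pow, ht, hs, Real.sq_sqrt (by positivity), Real.sq_sqrt ha]
    rw [hts]
    calc (∑ i ∈ sF, |v i - β i|)^2 ≤ (sF.card : ℝ) * ∑ i ∈ sF, (v i - β i)^2 := hcs2
      _ ≤ (sF.card : ℝ) * a := mul_le_mul_of_nonneg_left hle (by positivity)
  -- combine
  have hkey : c₂ * n * a ≤ 4 * c₁ * r * (t * s) := by
    calc c₂ * n * a ≤ 2 * c₁ * r * ((∑ i, |v i - β i|) - ((∑ i, |v i|) - ∑ i, |β i|)) := step1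
      _ ≤ 2 * c₁ * r * (2 * ∑ i ∈ sF, |v i - β i|) := by
          exact mul_le_mul_of_nonneg_left step2 (by positivity)
      _ ≤ 2 * c₁ * r * (2 * (t * s)) := by
          have := mul_le_mul_of_nonneg_left step3 (by norm_num : (0:ℝ) ≤ 2)
          exact mul_le_mul_of_nonneg_left this (by positivity)
      _ = 4 * c₁ * r * (t * s) := by ring
  -- goal rewriting
  show s ≤ (4 * c₁ / c₂) * Real.sqrt ((({i | β i ≠ 0} : Set (Fin p)).ncard : ℝ) / n)
  have hgr : Real.sqrt ((({i | β i ≠ 0} : Set (Fin p)).ncard : ℝ) / n) = t / r := by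
    rw [hcard, Real.sqrt_div (by positivity), ht, hr]
  rw [hgr]
  have hna : (n:ℝ) = r^2 := (Real.sq_sqrt hn0.le).symm
  have haa2 : a = s^2 := (Real.sq_sqrt ha).symm
  rcases eq_or_lt_of_le hsnn with hsz | hspos
  · rw [← hsz]; exact mul_nonneg (div_nonneg (by linarith) hc₂.le) (div_nonneg htnn hrpos.le)
  · rw [div_mul_div_comm, le_div_iff₀ (by positivity)]
    have hkey2 : c₂ * r^2 * s^2 ≤ 4 * c₁ * r * (t * s) := by
      rw [← hna, ← haa2]; exact hkey
    nlinarith [mul_pos hrpos hspos]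
end

section
/- Proposition 2.2 (deterministic part): Let X ∈ ℝ^{n×p} with nonzero columns, with coherence μ_X and column norm parameters a_X = min_i ‖V_i‖₂²/n, b_X = max_i ‖V_i‖₂²/n. Let β ∈ ℝ^p with s = |spt(β)|, τ > 0 with a_X + b_X μ_X > 2 b_X (3 + 4τ) s μ_X, and c₁, c₃ > 0. Suppose v ∈ ℝ^p satisfies c₃ ‖X(v − β)‖₂² ≤ 2c₁√n ‖v − β‖₁ − 2c₁(1 + 1/τ)√n (‖v‖₁ − ‖β‖₁). Then ‖v − β‖₂ ≤ κ_r √(s/n), where κ_r = 3(2 + 1/τ)√(2 + (1+2τ)²) c₁ / ((a_X + b_X μ_X) c₃). -/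
/-- Top-k subset extraction. -/
lemma exists_top_subset {ι : Type*} [DecidableEq ι] (w : ι → ℝ) :
    ∀ (k : ℕ) (F : Finset ι), k ≤ F.card →
      ∃ T ⊆ F, T.card = k ∧ ∀ j ∈ F \ T, ∀ i ∈ T, w j ≤ w i := by
  intro k
  induction k with
  | zero => intro F _; exact ⟨∅, Finset.empty_subset F, rfl, by simp⟩
  | succ k ih =>
    intro F hk
    have hne : F.Nonempty := Finset.card_pos.mp (by omega)
    obtain ⟨i₀, hi₀F, hmax⟩ := Finset.exists_max_image F w hne
    have hk' : k ≤ (F.erase i₀).card := by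
      rw [Finset.card_erase_of_mem hi₀F]; omega
    obtain ⟨T', hT'sub, hT'card, hT'max⟩ := ih (F.erase i₀) hk'
    have hi₀T' : i₀ ∉ T' := fun h => (Finset.mem_erase.mp (hT'sub h)).1 rfl
    refine ⟨insert i₀ T', ?_, ?_, ?_⟩
    · intro i hi
      rcases Finset.mem_insert.mp hi with h | h
      · exact h ▸ hi₀F
      · exact Finset.mem_of_mem_erase (hT'sub h)
    · rw [Finset.card_insert_of_notMem hi₀T', hT'card]
    · intro j hj i hi
      obtain ⟨hjF, hjT⟩ := Finset.mem_sdiff.mp hj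
      rcases Finset.mem_insert.mp hi with rfl | hiT'
      · exact hmax j hjF
      · refine hT'max j (Finset.mem_sdiff.mpr ⟨Finset.mem_erase.mpr ⟨?_, hjF⟩,
          fun h => hjT (Finset.mem_insert_of_mem h)⟩) i hiT'
        intro h; exact hjT (h ▸ Finset.mem_insert_self i₀ T')

/-- Cauchy–Schwarz: squared ℓ¹ norm vs card times ℓ². -/
lemma sq_sum_abs_le {ι : Type*} (A : Finset ι) (f : ι → ℝ) :
    (∑ i ∈ A, |f i|) ^ 2 ≤ A.card * ∑ i ∈ A, f i ^ 2 := by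
  have h := Finset.sum_mul_sq_le_sq_mul_sq A (fun _ => (1:ℝ)) (fun i => |f i|)
  simpa [sq_abs] using h

/-- Expansion of an inner product of partial X-sums into Gram entries. -/
lemma sum_prod_expand {n p : ℕ} (X : Matrix (Fin n) (Fin p) ℝ) (h : Fin p → ℝ)
    (A B : Finset (Fin p)) :
    ∑ k, (∑ i ∈ A, h i * X k i) * (∑ j ∈ B, h j * X k j)
      = ∑ i ∈ A, ∑ j ∈ B, h i * h j * (∑ k, X k i * X k j) := by
  simp_rw [Finset.sum_mul_sum, Finset.mul_sum]
  rw [Finset.sum_comm]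
  refine Finset.sum_congr rfl fun i _ => ?_
  rw [Finset.sum_comm]
  refine Finset.sum_congr rfl fun j _ => ?_
  exact Finset.sum_congr rfl fun k _ => by ring

set_option maxHeartbeats 1000000 in
lemma core_poly (x θ ρ : ℝ) (hx : 1 ≤ x) (hθ : 0 ≤ θ) (hρ : 0 ≤ ρ) (hsum : θ + ρ ≤ x) :
    16*(1+θ*ρ)*(1+2*x)^2*(x-(θ+ρ))^2 ≤ 36*x^2*(2+x^2)*(2*x-Real.sqrt 2*ρ)^2 := by
  have hw0 : 0 ≤ Real.sqrt 2 := Real.sqrt_nonneg 2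
  have hw2 : (Real.sqrt 2)^2 = 2 := Real.sq_sqrt (by norm_num)
  have hw15 : Real.sqrt 2 ≤ 3/2 := by nlinarith
  generalize Real.sqrt 2 = w at hw0 hw2 hw15
  have hpos : x/2 ≤ 2*x - (3/2)*ρ := by nlinarith
  have hmono : (2*x - (3/2)*ρ)^2 ≤ (2*x - w*ρ)^2 := by
    have h1 : 2*x - (3/2)*ρ ≤ 2*x - w*ρ := by nlinarith
    have h2 : 0 ≤ 2*x - (3/2)*ρ := by linarith
    nlinarith
  have hA : 16*(1+2*x)^2*(x-(θ+ρ))^2 ≤ 24*x^2*(2+x^2)*(2*x-(3/2)*ρ)^2 := by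
    have h1 : (x-(θ+ρ))^2 ≤ (x-ρ)^2 := by nlinarith
    have h2 : 4*(x-ρ)^2 ≤ (2*x-(3/2)*ρ)^2 := by nlinarith
    have h3 : (1+2*x)^2 ≤ 6*x^2*(2+x^2) := by nlinarith [sq_nonneg (x-1), sq_nonneg (x*x-1)]
    have c1 : 16*(1+2*x)^2*(x-(θ+ρ))^2 ≤ 16*(1+2*x)^2*(x-ρ)^2 := by
      have := mul_le_mul_of_nonneg_left h1 (show (0:ℝ) ≤ 16*(1+2*x)^2 by positivity)
      linarith
    have c2 : 4*(1+2*x)^2*(4*(x-ρ)^2) ≤ 4*(6*x^2*(2+x^2))*((2*x-(3/2)*ρ)^2) := by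
      have := mul_le_mul h3 h2 (by positivity) (by positivity)
      nlinarith [this]
    nlinarith [c1, c2]
  have hB : 16*(θ*ρ)*(1+2*x)^2*(x-(θ+ρ))^2 ≤ 12*x^2*(2+x^2)*(2*x-(3/2)*ρ)^2 := by
    have s1 : (θ+ρ)*(x-(θ+ρ)) ≤ x^2/4 := by nlinarith [sq_nonneg (x-2*(θ+ρ))]
    have s2 : 4*(θ*ρ) ≤ (θ+ρ)^2 := by nlinarith [sq_nonneg (θ-ρ)]
    have s3 : (1+2*x)^2 ≤ 9*x^2 := by nlinarith
    have s0 : 0 ≤ (θ+ρ)*(x-(θ+ρ)) := by nlinarith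
    have s4 : ((θ+ρ)*(x-(θ+ρ)))^2 ≤ (x^2/4)^2 := by nlinarith
    have s5 : 16*(θ*ρ)*(1+2*x)^2*(x-(θ+ρ))^2 ≤ 4*((θ+ρ)^2*(9*x^2))*(x-(θ+ρ))^2 := by
      have e1 : 4*(θ*ρ)*(1+2*x)^2 ≤ (θ+ρ)^2*(9*x^2) :=
        mul_le_mul s2 s3 (by positivity) (by positivity)
      have := mul_le_mul_of_nonneg_right e1 (sq_nonneg (x-(θ+ρ)))
      nlinarith [this]
    have s7 : 4*((θ+ρ)^2*(9*x^2))*(x-(θ+ρ))^2 ≤ 36*x^2*(x^2/4)^2 := by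
      have e2 : 36*x^2*((θ+ρ)*(x-(θ+ρ)))^2 ≤ 36*x^2*(x^2/4)^2 :=
        mul_le_mul_of_nonneg_left s4 (by positivity)
      nlinarith [e2]
    have s8 : 36*x^2*(x^2/4)^2 ≤ 12*x^2*(2+x^2)*(2*x-(3/2)*ρ)^2 := by
      have h9 : (x/2)^2 ≤ (2*x-(3/2)*ρ)^2 := by nlinarith
      have h10 : x^2 ≤ 2+x^2 := by nlinarith
      have e3 : x^2*(x/2)^2 ≤ (2+x^2)*(2*x-(3/2)*ρ)^2 :=
        mul_le_mul h10 h9 (by positivity) (by positivity)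
      nlinarith [mul_le_mul_of_nonneg_left e3 (show (0:ℝ) ≤ 12*x^2 by positivity)]
    linarith
  have key : 16*(1+θ*ρ)*(1+2*x)^2*(x-(θ+ρ))^2 ≤ 36*x^2*(2+x^2)*(2*x-(3/2)*ρ)^2 := by
    nlinarith [hA, hB]
  have final : 36*x^2*(2+x^2)*(2*x-(3/2)*ρ)^2 ≤ 36*x^2*(2+x^2)*(2*x-w*ρ)^2 :=
    mul_le_mul_of_nonneg_left hmono (by positivity)
  linarith

lemma sqrt2_le_32 : Real.sqrt 2 ≤ 3/2 := by
  nlinarith [Real.sq_sqrt (show (0:ℝ) ≤ 2 by norm_num), Real.sqrt_nonneg 2]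

set_option maxHeartbeats 2000000 in
/-- Proposition 2.2, deterministic part: any `v` satisfying the basic inequality
obeys `‖v − β‖₂ ≤ κ_r √(s/n)`. -/
theorem stmt10 {n p : ℕ} (X : Matrix (Fin n) (Fin p) ℝ)
    (hV : ∀ j, (fun k => X k j) ≠ 0)
    (a b μ : ℝ) (ha : 0 < a) (hb : 0 < b) (hμ0 : 0 ≤ μ)
    (haX : ∀ j, a * n ≤ ∑ k, X k j ^ 2)
    (hbX : ∀ j, (∑ k, X k j ^ 2) ≤ b * n)
    (hμ : ∀ i j : Fin p, i ≠ j →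
      |∑ k, X k i * X k j| ≤
        μ * (Real.sqrt (∑ k, X k i ^ 2) * Real.sqrt (∑ k, X k j ^ 2)))
    (β v : Fin p → ℝ) (τ c₁ c₃ : ℝ) (hτ : 0 < τ) (hc₁ : 0 < c₁) (hc₃ : 0 < c₃)
    (s : ℕ) (hs : s = ({i | β i ≠ 0} : Set (Fin p)).ncard)
    (hgap : 2 * b * (3 + 4 * τ) * s * μ < a + b * μ)
    (hineq : c₃ * (∑ k, (∑ i, (v i - β i) * X k i) ^ 2) ≤
        2 * c₁ * Real.sqrt n * (∑ i, |v i - β i|)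
          - 2 * c₁ * (1 + 1 / τ) * Real.sqrt n * ((∑ i, |v i|) - ∑ i, |β i|)) :
    Real.sqrt (∑ i, (v i - β i) ^ 2) ≤
      (3 * (2 + 1 / τ) * Real.sqrt (2 + (1 + 2 * τ) ^ 2) * c₁
        / ((a + b * μ) * c₃)) * Real.sqrt (s / n) := by
  classical
  have hg : 0 < a + b * μ := by nlinarith [mul_nonneg hb.le hμ0]
  have hτ' : 0 < 2 + 1/τ := by positivity
  have hK0 : 0 ≤ 3 * (2 + 1 / τ) * Real.sqrt (2 + (1 + 2 * τ) ^ 2) * c₁ / ((a + b * μ) * c₃) := by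
    apply div_nonneg _ (by positivity)
    have := Real.sqrt_nonneg (2 + (1 + 2 * τ) ^ 2)
    positivity
  have hRHS0 : 0 ≤ (3 * (2 + 1 / τ) * Real.sqrt (2 + (1 + 2 * τ) ^ 2) * c₁
        / ((a + b * μ) * c₃)) * Real.sqrt (s / n) :=
    mul_nonneg hK0 (Real.sqrt_nonneg _)
  by_cases hp0 : p = 0
  · subst hp0
    simp only [Finset.univ_eq_empty, Finset.sum_empty, Real.sqrt_zero]
    exact hRHS0
  have hn : 0 < n := by
    rcases Nat.eq_zero_or_pos n with hn0 | hn0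
    · subst hn0
      exact absurd (funext fun k => k.elim0) (hV ⟨0, Nat.pos_of_ne_zero hp0⟩)
    · exact hn0
  -- notation
  set h : Fin p → ℝ := fun i => v i - β i with hhdef
  set m : ℝ := Real.sqrt n with hmdef
  have hm : 0 < m := Real.sqrt_pos.mpr (by exact_mod_cast hn)
  have hm2 : m^2 = n := Real.sq_sqrt (Nat.cast_nonneg n)
  -- support set
  set S : Finset (Fin p) := Set.toFinset {i | β i ≠ 0} with hSdef
  have hmemS : ∀ i, i ∈ S ↔ β i ≠ 0 := fun i => by simp [hSdef]
  have hcardS : S.card = s := by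
    rw [hs, hSdef]; exact (Set.ncard_eq_toFinset_card' _).symm
  by_cases hs0 : s = 0
  · -- β ≡ 0, then h ≡ 0
    have hβ0 : ∀ i, β i = 0 := by
      intro i
      by_contra hne
      have : i ∈ S := (hmemS i).mpr hne
      rw [Finset.card_eq_zero.mp (hcardS.trans hs0)] at this
      exact absurd this (Finset.notMem_empty i)
    have habs0 : (∑ i, |v i - β i|) = 0 := by
      have hLHS0 : 0 ≤ c₃ * (∑ k, (∑ i, (v i - β i) * X k i) ^ 2) := by positivity
      have hveq : (∑ i, |v i|) = ∑ i, |v i - β i| := by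
        refine Finset.sum_congr rfl fun i _ => by rw [hβ0 i, sub_zero]
      have hβabs : (∑ i, |β i|) = 0 := by
        refine Finset.sum_eq_zero fun i _ => by rw [hβ0 i, abs_zero]
      have hsumnn : 0 ≤ ∑ i, |v i - β i| := Finset.sum_nonneg fun i _ => abs_nonneg _
      have hkey : 2 * c₁ * m * (∑ i, |v i - β i|)
          - 2 * c₁ * (1 + 1 / τ) * m * ((∑ i, |v i|) - ∑ i, |β i|)
          = -(2 * c₁ * m / τ) * (∑ i, |v i - β i|) := by
        rw [hveq, hβabs]; ring
      have hle : (2 * c₁ * m / τ) * (∑ i, |v i - β i|) ≤ 0 := by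
        have := hineq; rw [hkey] at this; linarith
      by_contra hA
      have hA' : 0 < ∑ i, |v i - β i| := lt_of_le_of_ne hsumnn (Ne.symm hA)
      nlinarith [mul_pos (show (0:ℝ) < 2 * c₁ * m / τ by positivity) hA']
    have hzero : ∀ i, v i - β i = 0 := by
      intro i
      have := Finset.sum_eq_zero_iff_of_nonneg (fun i _ => abs_nonneg (v i - β i)) |>.mp habs0 i (Finset.mem_univ i)
      exact abs_eq_zero.mp this
    have : (∑ i, (v i - β i)^2) = 0 := Finset.sum_eq_zero fun i _ => by rw [hzero i]; ring
    rw [this, Real.sqrt_zero]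
    exact hRHS0
  -- main case: s ≥ 1, n ≥ 1
  have hs1 : 1 ≤ s := Nat.one_le_iff_ne_zero.mpr hs0
  set e : ℝ := Real.sqrt s with hedef
  have he : 0 < e := Real.sqrt_pos.mpr (by exact_mod_cast Nat.pos_of_ne_zero hs0)
  have he2 : e^2 = s := Real.sq_sqrt (Nat.cast_nonneg s)
  set B : ℝ := b * μ with hBdef
  have hB0 : 0 ≤ B := mul_nonneg hb.le hμ0
  set g : ℝ := a + b * μ with hgdef
  -- the top-s subset of Sᶜ
  obtain ⟨T₁, hT₁F, hT₁card, hT₁top⟩ :=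
    exists_top_subset (fun i => |h i|) (min s Sᶜ.card) Sᶜ (min_le_right _ _)
  set P : Finset (Fin p) := S ∪ T₁ with hPdef
  have hST₁ : Disjoint S T₁ := by
    rw [Finset.disjoint_left]
    intro i hiS hiT₁
    exact (Finset.mem_compl.mp (hT₁F hiT₁)) hiS
  have hPc : Pᶜ = Sᶜ \ T₁ := by
    ext i
    simp only [Finset.mem_compl, hPdef, Finset.mem_union, Finset.mem_sdiff]
    tauto
  have hPcard : (P.card : ℝ) ≤ 2 * s := by
    have h1 : P.card ≤ S.card + T₁.card := Finset.card_union_le S T₁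
    have h2 : T₁.card ≤ s := hT₁card ▸ min_le_left _ _
    have : P.card ≤ 2 * s := by omega
    exact_mod_cast this
  -- quantities
  set U : ℝ := ∑ i ∈ P, h i ^ 2 with hUdef
  set R : ℝ := ∑ i ∈ Pᶜ, h i ^ 2 with hRdef
  set L : ℝ := ∑ i ∈ P, |h i| with hLdef
  set q1 : ℝ := ∑ i ∈ S, |h i| with hq1def
  set t1 : ℝ := ∑ i ∈ T₁, |h i| with ht1def
  set r1 : ℝ := ∑ i ∈ Pᶜ, |h i| with hr1def
  have hU0 : 0 ≤ U := Finset.sum_nonneg fun i _ => sq_nonneg _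
  have hR0 : 0 ≤ R := Finset.sum_nonneg fun i _ => sq_nonneg _
  have hL0 : 0 ≤ L := Finset.sum_nonneg fun i _ => abs_nonneg _
  have hq10 : 0 ≤ q1 := Finset.sum_nonneg fun i _ => abs_nonneg _
  have ht10 : 0 ≤ t1 := Finset.sum_nonneg fun i _ => abs_nonneg _
  have hr10 : 0 ≤ r1 := Finset.sum_nonneg fun i _ => abs_nonneg _
  have hsum_sq : (∑ i, h i ^ 2) = U + R := (Finset.sum_add_sum_compl P _).symm
  have hsum_P : L = q1 + t1 := Finset.sum_union hST₁
  have hsum_abs : (∑ i, |h i|) = q1 + t1 + r1 := by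
    rw [← Finset.sum_add_sum_compl P (fun i => |h i|), ← hLdef, ← hr1def, hsum_P]
  -- Gram bounds
  have hGd : ∀ i, a * n ≤ ∑ k, X k i * X k i := by
    intro i
    have := haX i
    simpa [sq] using this
  have hGo : ∀ i j, i ≠ j → |∑ k, X k i * X k j| ≤ B * n := by
    intro i j hij
    refine (hμ i j hij).trans ?_
    have h1 : Real.sqrt (∑ k, X k i ^ 2) ≤ Real.sqrt (b * n) := Real.sqrt_le_sqrt (hbX i)
    have h2 : Real.sqrt (∑ k, X k j ^ 2) ≤ Real.sqrt (b * n) := Real.sqrt_le_sqrt (hbX j)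
    have h3 : Real.sqrt (∑ k, X k i ^ 2) * Real.sqrt (∑ k, X k j ^ 2)
        ≤ Real.sqrt (b * n) * Real.sqrt (b * n) :=
      mul_le_mul h1 h2 (Real.sqrt_nonneg _) (Real.sqrt_nonneg _)
    have h4 : Real.sqrt (b * n) * Real.sqrt (b * n) = b * n :=
      Real.mul_self_sqrt (by positivity)
    calc μ * (Real.sqrt (∑ k, X k i ^ 2) * Real.sqrt (∑ k, X k j ^ 2))
        ≤ μ * (b * n) := mul_le_mul_of_nonneg_left (h4 ▸ h3) hμ0
      _ = B * n := by rw [hBdef]; ring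
  -- expansion of ‖Xh‖²
  have hsplity : ∀ k, (∑ i, h i * X k i)
      = (∑ i ∈ P, h i * X k i) + (∑ i ∈ Pᶜ, h i * X k i) :=
    fun k => (Finset.sum_add_sum_compl P _).symm
  have hexpand : (∑ k, (∑ i, h i * X k i) ^ 2)
      = (∑ i ∈ P, ∑ j ∈ P, h i * h j * (∑ k, X k i * X k j))
        + 2 * (∑ i ∈ P, ∑ j ∈ Pᶜ, h i * h j * (∑ k, X k i * X k j))
        + ∑ k, (∑ i ∈ Pᶜ, h i * X k i) ^ 2 := by
    have hterm : ∀ k : Fin n, (∑ i, h i * X k i) ^ 2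
        = (∑ i ∈ P, h i * X k i) * (∑ j ∈ P, h j * X k j)
          + 2 * ((∑ i ∈ P, h i * X k i) * (∑ j ∈ Pᶜ, h j * X k j))
          + (∑ i ∈ Pᶜ, h i * X k i) ^ 2 := fun k => by rw [hsplity k]; ring
    calc (∑ k, (∑ i, h i * X k i) ^ 2)
        = ∑ k, ((∑ i ∈ P, h i * X k i) * (∑ j ∈ P, h j * X k j)
            + 2 * ((∑ i ∈ P, h i * X k i) * (∑ j ∈ Pᶜ, h j * X k j))
            + (∑ i ∈ Pᶜ, h i * X k i) ^ 2) := Finset.sum_congr rfl fun k _ => hterm k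
      _ = (∑ k, (∑ i ∈ P, h i * X k i) * (∑ j ∈ P, h j * X k j))
            + (∑ k, 2 * ((∑ i ∈ P, h i * X k i) * (∑ j ∈ Pᶜ, h j * X k j)))
            + ∑ k, (∑ i ∈ Pᶜ, h i * X k i) ^ 2 := by
          rw [Finset.sum_add_distrib, Finset.sum_add_distrib]
      _ = _ := by
          rw [sum_prod_expand X h P P, ← Finset.mul_sum, sum_prod_expand X h P Pᶜ]
  -- lower bound for the P×P block
  have hQPP : g * n * U - B * n * L ^ 2
      ≤ ∑ i ∈ P, ∑ j ∈ P, h i * h j * (∑ k, X k i * X k j) := by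
    have hsplit : (∑ i ∈ P, ∑ j ∈ P, h i * h j * (∑ k, X k i * X k j))
        = (∑ i ∈ P, h i * h i * (∑ k, X k i * X k i))
          + ∑ i ∈ P, ∑ j ∈ P.erase i, h i * h j * (∑ k, X k i * X k j) := by
      rw [← Finset.sum_add_distrib]
      exact Finset.sum_congr rfl fun i hi => (Finset.add_sum_erase P _ hi).symm
    have hdiag : a * n * U ≤ ∑ i ∈ P, h i * h i * (∑ k, X k i * X k i) := by
      have : ∀ i ∈ P, h i ^ 2 * (a * n) ≤ h i * h i * (∑ k, X k i * X k i) := by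
        intro i _
        have := mul_le_mul_of_nonneg_left (hGd i) (sq_nonneg (h i))
        calc h i ^ 2 * (a * n) = h i ^ 2 * (a * n) := rfl
          _ ≤ h i ^ 2 * (∑ k, X k i * X k i) := this
          _ = h i * h i * (∑ k, X k i * X k i) := by ring
      calc a * n * U = ∑ i ∈ P, h i ^ 2 * (a * n) := by
            rw [hUdef, Finset.mul_sum]; exact Finset.sum_congr rfl fun i _ => by ring
        _ ≤ _ := Finset.sum_le_sum this
    have hoff : -(B * n * (L ^ 2 - U))
        ≤ ∑ i ∈ P, ∑ j ∈ P.erase i, h i * h j * (∑ k, X k i * X k j) := by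
      have hinner : ∀ i ∈ P, -(|h i| * (L - |h i|) * (B * n))
          ≤ ∑ j ∈ P.erase i, h i * h j * (∑ k, X k i * X k j) := by
        intro i hi
        have hterm : ∀ j ∈ P.erase i, -(|h i| * |h j| * (B * n))
            ≤ h i * h j * (∑ k, X k i * X k j) := by
          intro j hj
          have hij : i ≠ j := ((Finset.mem_erase.mp hj).1).symm
          have habs : |h i * h j * (∑ k, X k i * X k j)| ≤ |h i| * |h j| * (B * n) := by
            rw [abs_mul, abs_mul]
            exact mul_le_mul_of_nonneg_left (hGo i j hij)
              (mul_nonneg (abs_nonneg _) (abs_nonneg _))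
          linarith [neg_abs_le (h i * h j * (∑ k, X k i * X k j))]
        have hsum1 : ∑ j ∈ P.erase i, |h i| * |h j| * (B * n)
            = |h i| * (L - |h i|) * (B * n) := by
          have e1 : ∑ j ∈ P.erase i, |h i| * |h j| * (B * n)
              = (|h i| * (B * n)) * ∑ j ∈ P.erase i, |h j| := by
            rw [Finset.mul_sum]
            exact Finset.sum_congr rfl fun j _ => by ring
          rw [e1, Finset.sum_erase_eq_sub hi, ← hLdef]
          ring
        calc -(|h i| * (L - |h i|) * (B * n))
            = ∑ j ∈ P.erase i, -(|h i| * |h j| * (B * n)) := by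
              rw [Finset.sum_neg_distrib, hsum1]
          _ ≤ _ := Finset.sum_le_sum hterm
      have hsum2 : ∑ i ∈ P, |h i| * (L - |h i|) * (B * n) = B * n * (L ^ 2 - U) := by
        have e1 : ∑ i ∈ P, |h i| * (L - |h i|) * (B * n)
            = (B * n) * ((∑ i ∈ P, |h i| * L) - ∑ i ∈ P, |h i| * |h i|) := by
          rw [← Finset.sum_sub_distrib, Finset.mul_sum]
          exact Finset.sum_congr rfl fun i _ => by ring
        have e2 : (∑ i ∈ P, |h i| * L) = L ^ 2 := by
          rw [← Finset.sum_mul, ← hLdef]; ring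
        have e3 : (∑ i ∈ P, |h i| * |h i|) = U := by
          rw [hUdef]
          exact Finset.sum_congr rfl fun i _ => by rw [abs_mul_abs_self, sq]
        rw [e1, e2, e3]
      calc -(B * n * (L ^ 2 - U)) = ∑ i ∈ P, -(|h i| * (L - |h i|) * (B * n)) := by
            rw [Finset.sum_neg_distrib, hsum2]
        _ ≤ _ := Finset.sum_le_sum hinner
    have heq : g * n * U - B * n * L ^ 2 = a * n * U + -(B * n * (L ^ 2 - U)) := by
      rw [hgdef, hBdef]; ring
    rw [hsplit, heq]
    exact add_le_add hdiag hoff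
  -- lower bound for the P×Pᶜ cross block
  have hQPPc : -(B * n * (L * r1))
      ≤ ∑ i ∈ P, ∑ j ∈ Pᶜ, h i * h j * (∑ k, X k i * X k j) := by
    have hinner : ∀ i ∈ P, -(|h i| * r1 * (B * n))
        ≤ ∑ j ∈ Pᶜ, h i * h j * (∑ k, X k i * X k j) := by
      intro i hi
      have hterm : ∀ j ∈ Pᶜ, -(|h i| * |h j| * (B * n))
          ≤ h i * h j * (∑ k, X k i * X k j) := by
        intro j hj
        have hij : i ≠ j := fun hij => (Finset.mem_compl.mp hj) (hij ▸ hi)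
        have habs : |h i * h j * (∑ k, X k i * X k j)| ≤ |h i| * |h j| * (B * n) := by
          rw [abs_mul, abs_mul]
          exact mul_le_mul_of_nonneg_left (hGo i j hij)
            (mul_nonneg (abs_nonneg _) (abs_nonneg _))
        linarith [neg_abs_le (h i * h j * (∑ k, X k i * X k j))]
      have hsum1 : ∑ j ∈ Pᶜ, |h i| * |h j| * (B * n) = |h i| * r1 * (B * n) := by
        have e1 : ∑ j ∈ Pᶜ, |h i| * |h j| * (B * n)
            = (|h i| * (B * n)) * ∑ j ∈ Pᶜ, |h j| := by
          rw [Finset.mul_sum]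
          exact Finset.sum_congr rfl fun j _ => by ring
        rw [e1, ← hr1def]; ring
      calc -(|h i| * r1 * (B * n)) = ∑ j ∈ Pᶜ, -(|h i| * |h j| * (B * n)) := by
            rw [Finset.sum_neg_distrib, hsum1]
        _ ≤ _ := Finset.sum_le_sum hterm
    have hsum2 : ∑ i ∈ P, |h i| * r1 * (B * n) = B * n * (L * r1) := by
      have e1 : ∑ i ∈ P, |h i| * r1 * (B * n)
          = (r1 * (B * n)) * ∑ i ∈ P, |h i| := by
        rw [Finset.mul_sum]
        exact Finset.sum_congr rfl fun i _ => by ring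
      rw [e1, ← hLdef]; ring
    calc -(B * n * (L * r1)) = ∑ i ∈ P, -(|h i| * r1 * (B * n)) := by
          rw [Finset.sum_neg_distrib, hsum2]
      _ ≤ _ := Finset.sum_le_sum hinner
  -- big quadratic lower bound
  have hLB : g * n * U - B * n * L ^ 2 - 2 * (B * n * (L * r1))
      ≤ ∑ k, (∑ i, h i * X k i) ^ 2 := by
    have h3 : (0:ℝ) ≤ ∑ k, (∑ i ∈ Pᶜ, h i * X k i) ^ 2 :=
      Finset.sum_nonneg fun k _ => sq_nonneg _
    rw [hexpand]
    linarith [hQPP, hQPPc]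
  -- upper bound from the hypothesis inequality
  have hineq2 : c₃ * (∑ k, (∑ i, h i * X k i) ^ 2) ≤
      2 * c₁ * m * (∑ i, |h i|)
        - 2 * c₁ * (1 + 1 / τ) * m * ((∑ i, |v i|) - ∑ i, |β i|) := hineq
  have hβSc : ∀ i ∈ Sᶜ, β i = 0 := by
    intro i hi
    by_contra hne
    exact (Finset.mem_compl.mp hi) ((hmemS i).mpr hne)
  have hvβ : (t1 + r1) - q1 ≤ (∑ i, |v i|) - ∑ i, |β i| := by
    have hsplitv : (∑ i, (|v i| - |β i|))
        = ((∑ i ∈ S, (|v i| - |β i|)) + ∑ i ∈ T₁, (|v i| - |β i|))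
          + ∑ i ∈ Pᶜ, (|v i| - |β i|) := by
      rw [← Finset.sum_add_sum_compl P fun i => |v i| - |β i|, hPdef,
        Finset.sum_union hST₁]
    have hS1 : -q1 ≤ ∑ i ∈ S, (|v i| - |β i|) := by
      rw [hq1def, ← Finset.sum_neg_distrib]
      refine Finset.sum_le_sum fun i _ => ?_
      have := abs_sub_abs_le_abs_sub (β i) (v i)
      have h2 : |β i - v i| = |v i - β i| := abs_sub_comm _ _
      simp only [hhdef]
      linarith
    have hT1 : (∑ i ∈ T₁, (|v i| - |β i|)) = t1 := by
      rw [ht1def]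
      refine Finset.sum_congr rfl fun i hi => ?_
      have hb0 : β i = 0 := hβSc i (hT₁F hi)
      simp [hhdef, hb0]
    have hPc1 : (∑ i ∈ Pᶜ, (|v i| - |β i|)) = r1 := by
      rw [hr1def]
      refine Finset.sum_congr rfl fun i hi => ?_
      have hiSc : i ∈ Sᶜ := by
        rw [hPc] at hi; exact (Finset.mem_sdiff.mp hi).1
      have hb0 : β i = 0 := hβSc i hiSc
      simp [hhdef, hb0]
    have : (∑ i, (|v i| - |β i|)) = (∑ i, |v i|) - ∑ i, |β i| := by
      rw [Finset.sum_sub_distrib]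
    linarith [hsplitv, this, hS1, hT1, hPc1]
  have hcoef : (0:ℝ) ≤ 2 * c₁ * (1 + 1 / τ) * m := by positivity
  have hUP : c₃ * (∑ k, (∑ i, h i * X k i) ^ 2)
      ≤ 2 * c₁ * m * ((2 + 1 / τ) * q1 - (1 / τ) * (t1 + r1)) := by
    have step : 2 * c₁ * (1 + 1 / τ) * m * ((t1 + r1) - q1)
        ≤ 2 * c₁ * (1 + 1 / τ) * m * ((∑ i, |v i|) - ∑ i, |β i|) :=
      mul_le_mul_of_nonneg_left hvβ hcoef
    have heq2 : 2 * c₁ * m * (q1 + t1 + r1)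
        - 2 * c₁ * (1 + 1 / τ) * m * ((t1 + r1) - q1)
        = 2 * c₁ * m * ((2 + 1 / τ) * q1 - (1 / τ) * (t1 + r1)) := by
      ring
    rw [hsum_abs] at hineq2
    linarith
  -- Cauchy–Schwarz facts
  set u : ℝ := Real.sqrt U with hudef
  have hu2 : u ^ 2 = U := Real.sq_sqrt hU0
  have hu0 : 0 ≤ u := Real.sqrt_nonneg U
  have hq1u : q1 ≤ e * u := by
    have h1 : q1 ^ 2 ≤ S.card * ∑ i ∈ S, h i ^ 2 := by
      rw [hq1def]; exact sq_sum_abs_le S h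
    have h2 : (∑ i ∈ S, h i ^ 2) ≤ U := by
      rw [hUdef, hPdef]
      exact Finset.sum_le_sum_of_subset_of_nonneg Finset.subset_union_left
        (fun i _ _ => sq_nonneg _)
    have h3 : q1 ^ 2 ≤ (s:ℝ) * U := by
      rw [hcardS] at h1
      exact h1.trans (mul_le_mul_of_nonneg_left h2 (Nat.cast_nonneg s))
    calc q1 = Real.sqrt (q1 ^ 2) := (Real.sqrt_sq hq10).symm
      _ ≤ Real.sqrt ((s:ℝ) * U) := Real.sqrt_le_sqrt h3
      _ = e * u := by rw [Real.sqrt_mul (Nat.cast_nonneg s), hedef, hudef]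
  have hL2 : L ^ 2 ≤ 2 * (s:ℝ) * U := by
    have h1 : L ^ 2 ≤ P.card * U := by
      rw [hLdef, hUdef]; exact sq_sum_abs_le P h
    exact h1.trans (mul_le_mul_of_nonneg_right hPcard hU0)
  have hLu : L ≤ Real.sqrt 2 * (e * u) := by
    calc L = Real.sqrt (L ^ 2) := (Real.sqrt_sq hL0).symm
      _ ≤ Real.sqrt (2 * ((s:ℝ) * U)) := by
          apply Real.sqrt_le_sqrt; rw [← mul_assoc]; exact hL2
      _ = Real.sqrt 2 * (e * u) := by
          rw [Real.sqrt_mul (by norm_num : (0:ℝ) ≤ 2),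
            Real.sqrt_mul (Nat.cast_nonneg s), hedef, hudef]
  -- cone condition
  have hy0 : (0:ℝ) ≤ ∑ k, (∑ i, h i * X k i) ^ 2 :=
    Finset.sum_nonneg fun k _ => sq_nonneg _
  have hZ : 0 ≤ (2 + 1 / τ) * q1 - (1 / τ) * (t1 + r1) := by
    have h1 : (0:ℝ) ≤ 2 * c₁ * m * ((2 + 1 / τ) * q1 - (1 / τ) * (t1 + r1)) :=
      le_trans (by positivity) hUP
    have h2 : (0:ℝ) < 2 * c₁ * m := by positivity
    by_contra hneg
    push_neg at hneg
    exact absurd h1 (not_le.mpr (mul_neg_of_pos_of_neg h2 hneg))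
  have hcone : t1 + r1 ≤ (1 + 2 * τ) * q1 := by
    have e1 : τ * ((2 + 1 / τ) * q1 - (1 / τ) * (t1 + r1))
        = (2 * τ + 1) * q1 - (t1 + r1) := by
      field_simp
    have e2 : 0 ≤ τ * ((2 + 1 / τ) * q1 - (1 / τ) * (t1 + r1)) :=
      mul_nonneg hτ.le hZ
    rw [e1] at e2
    linarith
  -- tail bound
  have htail : (s:ℝ) * R ≤ t1 * r1 := by
    rcases le_or_gt s Sᶜ.card with hle | hlt
    · have hT₁s : T₁.card = s := by rw [hT₁card]; exact min_eq_left hle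
      have hjb : ∀ j ∈ Pᶜ, (s:ℝ) * |h j| ≤ t1 := by
        intro j hj
        rw [hPc] at hj
        calc (s:ℝ) * |h j| = ∑ _i ∈ T₁, |h j| := by
              rw [Finset.sum_const, hT₁s, nsmul_eq_mul]
          _ ≤ t1 := Finset.sum_le_sum (hT₁top j hj)
      calc (s:ℝ) * R = ∑ j ∈ Pᶜ, ((s:ℝ) * |h j|) * |h j| := by
            rw [hRdef, Finset.mul_sum]
            refine Finset.sum_congr rfl fun j _ => ?_
            rw [← sq_abs (h j)]; ring
        _ ≤ ∑ j ∈ Pᶜ, t1 * |h j| :=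
            Finset.sum_le_sum fun j hj =>
              mul_le_mul_of_nonneg_right (hjb j hj) (abs_nonneg _)
        _ = t1 * r1 := by rw [← Finset.mul_sum, hr1def]
    · have hcard' : Sᶜ.card ≤ T₁.card := by
        rw [hT₁card]; exact le_of_eq (min_eq_right hlt.le).symm
      have hT₁eq : T₁ = Sᶜ := Finset.eq_of_subset_of_card_le hT₁F hcard'
      have hR00 : R = 0 := by
        rw [hRdef, hPc, hT₁eq, Finset.sdiff_self, Finset.sum_empty]
      rw [hR00, mul_zero]
      exact mul_nonneg ht10 hr10
  -- gap in real form
  have hgapR : 2 * B * (s:ℝ) * (3 + 4 * τ) ≤ g := by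
    have e1 : 2 * B * (s:ℝ) * (3 + 4 * τ) = 2 * b * (3 + 4 * τ) * s * μ := by
      rw [hBdef]; ring
    linarith [le_of_lt hgap]
  -- final analysis
  have hscast : (0:ℝ) < s := by exact_mod_cast Nat.pos_of_ne_zero hs0
  rcases eq_or_lt_of_le hu0 with hu00 | hupos
  · -- u = 0 : everything vanishes
    have hU00 : U = 0 := by rw [← hu2, ← hu00]; ring
    have hq0 : q1 = 0 := by
      have h1 := hq1u
      rw [← hu00, mul_zero] at h1
      linarith
    have ht0 : t1 = 0 ∧ r1 = 0 := by
      constructor <;> [skip; skip] <;>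
        (have h1 := hcone; rw [hq0, mul_zero] at h1; linarith)
    have hR00 : R = 0 := by
      have h1 := htail
      rw [ht0.1, zero_mul] at h1
      refine le_antisymm ?_ hR0
      by_contra hc
      push_neg at hc
      exact absurd h1 (not_le.mpr (mul_pos hscast hc))
    rw [hsum_sq, hU00, hR00, add_zero, Real.sqrt_zero]
    exact hRHS0
  · -- u > 0 : main computation
    set θ : ℝ := t1 / (e * u) with hθdef
    set ρ : ℝ := r1 / (e * u) with hρdef
    have heu : 0 < e * u := mul_pos he hupos
    have hθ0 : 0 ≤ θ := div_nonneg ht10 heu.le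
    have hρ0 : 0 ≤ ρ := div_nonneg hr10 heu.le
    have ht1eq : t1 = θ * (e * u) := (div_mul_cancel₀ t1 heu.ne').symm
    have hr1eq : r1 = ρ * (e * u) := (div_mul_cancel₀ r1 heu.ne').symm
    set x : ℝ := 1 + 2 * τ with hxdef
    have hx1 : 1 ≤ x := by rw [hxdef]; linarith
    have hθρx : θ + ρ ≤ x := by
      have h0 : (0:ℝ) ≤ x := by linarith
      have h1 : t1 + r1 ≤ x * (e * u) :=
        le_trans hcone (by rw [hxdef]; exact mul_le_mul_of_nonneg_left hq1u (by linarith))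
      rw [ht1eq, hr1eq] at h1
      have h2 : (θ + ρ) * (e * u) ≤ x * (e * u) := by linarith
      exact le_of_mul_le_mul_right h2 heu
    have hRb : R ≤ θ * ρ * u ^ 2 := by
      have e1 : t1 * r1 = (s:ℝ) * (θ * ρ * u ^ 2) := by
        rw [ht1eq, hr1eq, ← he2]; ring
      have h2 : (s:ℝ) * R ≤ (s:ℝ) * (θ * ρ * u ^ 2) := by
        rw [← e1]; exact htail
      exact le_of_mul_le_mul_left h2 hscast
    -- the key inequality, fraction-free
    have b1u : B * (n:ℝ) * L ^ 2 ≤ B * (n:ℝ) * (2 * (s:ℝ) * u ^ 2) := by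
      rw [hu2]
      exact mul_le_mul_of_nonneg_left hL2 (by positivity)
    have b2u : B * (n:ℝ) * (L * r1) ≤ B * (n:ℝ) * (Real.sqrt 2 * ρ * ((s:ℝ) * u ^ 2)) := by
      have h1 : L * r1 ≤ (Real.sqrt 2 * (e * u)) * (ρ * (e * u)) := by
        rw [← hr1eq]
        exact mul_le_mul_of_nonneg_right hLu hr10
      have h2 : (Real.sqrt 2 * (e * u)) * (ρ * (e * u))
          = Real.sqrt 2 * ρ * ((s:ℝ) * u ^ 2) := by rw [← he2]; ring
      exact mul_le_mul_of_nonneg_left (h2 ▸ h1) (by positivity)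
    have lhs1 : (n:ℝ) * (u ^ 2 * (g - 2 * B * (s:ℝ) * (1 + Real.sqrt 2 * ρ)))
        ≤ g * (n:ℝ) * U - B * (n:ℝ) * L ^ 2 - 2 * (B * (n:ℝ) * (L * r1)) := by
      rw [← hu2]
      have expand : (n:ℝ) * (u ^ 2 * (g - 2 * B * (s:ℝ) * (1 + Real.sqrt 2 * ρ)))
          = g * (n:ℝ) * u ^ 2 - B * (n:ℝ) * (2 * (s:ℝ) * u ^ 2)
            - 2 * (B * (n:ℝ) * (Real.sqrt 2 * ρ * ((s:ℝ) * u ^ 2))) := by ring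
      linarith [b1u, b2u, expand.le, expand.ge]
    have hA1 : c₃ * ((n:ℝ) * (u ^ 2 * (g - 2 * B * (s:ℝ) * (1 + Real.sqrt 2 * ρ))))
        ≤ 2 * c₁ * m * ((2 + 1 / τ) * q1 - (1 / τ) * (t1 + r1)) := by
      have h1 := mul_le_mul_of_nonneg_left lhs1 hc₃.le
      have h2 := mul_le_mul_of_nonneg_left hLB hc₃.le
      exact h1.trans (h2.trans hUP)
    have hgap2 : 2 * B * (s:ℝ) * (1 + 2 * x) ≤ g := by
      have e1 : (1 + 2 * x) = 3 + 4 * τ := by rw [hxdef]; ring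
      rw [e1]
      exact hgapR
    have hgap3 : g * (2 * x - Real.sqrt 2 * ρ)
        ≤ (g - 2 * B * (s:ℝ) * (1 + Real.sqrt 2 * ρ)) * (1 + 2 * x) := by
      have h0 : (0:ℝ) ≤ 1 + Real.sqrt 2 * ρ := by positivity
      have h1 : 2 * B * (s:ℝ) * (1 + 2 * x) * (1 + Real.sqrt 2 * ρ)
          ≤ g * (1 + Real.sqrt 2 * ρ) := mul_le_mul_of_nonneg_right hgap2 h0
      have e2 : (g - 2 * B * (s:ℝ) * (1 + Real.sqrt 2 * ρ)) * (1 + 2 * x)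
          = g * (1 + 2 * x) - 2 * B * (s:ℝ) * (1 + 2 * x) * (1 + Real.sqrt 2 * ρ) := by ring
      have e3 : g * (2 * x - Real.sqrt 2 * ρ)
          = g * (1 + 2 * x) - g * (1 + Real.sqrt 2 * ρ) := by ring
      rw [e2, e3]
      linarith [h1]
    have hτinv : τ * (1 / τ) = 1 := mul_one_div_cancel hτ.ne'
    have id1 : τ * ((2 + 1 / τ) * q1 - (1 / τ) * (t1 + r1)) = x * q1 - (t1 + r1) := by
      calc τ * ((2 + 1 / τ) * q1 - (1 / τ) * (t1 + r1))
          = (2 * τ) * q1 + (τ * (1 / τ)) * q1 - (τ * (1 / τ)) * (t1 + r1) := by ring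
        _ = x * q1 - (t1 + r1) := by rw [hτinv, hxdef]; ring
    have hA4 : τ * ((2 + 1 / τ) * q1 - (1 / τ) * (t1 + r1))
        ≤ (e * u) * (x - (θ + ρ)) := by
      rw [id1, ht1eq, hr1eq]
      have h1 : x * q1 ≤ x * (e * u) :=
        mul_le_mul_of_nonneg_left hq1u (by linarith)
      have e4 : (e * u) * (x - (θ + ρ))
          = x * (e * u) - (θ * (e * u) + ρ * (e * u)) := by ring
      rw [e4]
      linarith [h1]
    have hkey : τ * c₃ * (n:ℝ) * u ^ 2 * (g * (2 * x - Real.sqrt 2 * ρ))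
        ≤ 2 * c₁ * m * ((e * u) * ((1 + 2 * x) * (x - (θ + ρ)))) := by
      have h1 : τ * c₃ * (n:ℝ) * u ^ 2 * (g * (2 * x - Real.sqrt 2 * ρ))
          ≤ τ * c₃ * (n:ℝ) * u ^ 2 * ((g - 2 * B * (s:ℝ) * (1 + Real.sqrt 2 * ρ)) * (1 + 2 * x)) :=
        mul_le_mul_of_nonneg_left hgap3 (by positivity)
      have h2 : τ * ((1 + 2 * x) * (c₃ * ((n:ℝ) * (u ^ 2 * (g - 2 * B * (s:ℝ) * (1 + Real.sqrt 2 * ρ))))))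
          ≤ τ * ((1 + 2 * x) * (2 * c₁ * m * ((2 + 1 / τ) * q1 - (1 / τ) * (t1 + r1)))) := by
        refine mul_le_mul_of_nonneg_left (mul_le_mul_of_nonneg_left hA1 ?_) hτ.le
        rw [hxdef]; linarith
      have h3 : τ * ((1 + 2 * x) * (2 * c₁ * m * ((2 + 1 / τ) * q1 - (1 / τ) * (t1 + r1))))
          ≤ 2 * c₁ * m * ((e * u) * ((1 + 2 * x) * (x - (θ + ρ)))) := by
        have h4 := mul_le_mul_of_nonneg_left hA4
          (show (0:ℝ) ≤ (1 + 2 * x) * (2 * c₁ * m) by rw [hxdef]; positivity)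
        calc τ * ((1 + 2 * x) * (2 * c₁ * m * ((2 + 1 / τ) * q1 - (1 / τ) * (t1 + r1))))
            = (1 + 2 * x) * (2 * c₁ * m)
                * (τ * ((2 + 1 / τ) * q1 - (1 / τ) * (t1 + r1))) := by ring
          _ ≤ (1 + 2 * x) * (2 * c₁ * m) * ((e * u) * (x - (θ + ρ))) := h4
          _ = 2 * c₁ * m * ((e * u) * ((1 + 2 * x) * (x - (θ + ρ)))) := by ring
      calc τ * c₃ * (n:ℝ) * u ^ 2 * (g * (2 * x - Real.sqrt 2 * ρ))
          ≤ τ * c₃ * (n:ℝ) * u ^ 2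
              * ((g - 2 * B * (s:ℝ) * (1 + Real.sqrt 2 * ρ)) * (1 + 2 * x)) := h1
        _ = τ * ((1 + 2 * x) * (c₃ * ((n:ℝ)
              * (u ^ 2 * (g - 2 * B * (s:ℝ) * (1 + Real.sqrt 2 * ρ)))))) := by ring
        _ ≤ τ * ((1 + 2 * x)
              * (2 * c₁ * m * ((2 + 1 / τ) * q1 - (1 / τ) * (t1 + r1)))) := h2
        _ ≤ _ := h3
    -- square, apply the polynomial core inequality
    have hDpos : 0 < 2 * x - Real.sqrt 2 * ρ := by
      have hρx : ρ ≤ x := by linarith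
      have h1 : Real.sqrt 2 * ρ ≤ (3/2) * ρ :=
        mul_le_mul_of_nonneg_right sqrt2_le_32 hρ0
      linarith
    have hkey0 : 0 ≤ τ * c₃ * (n:ℝ) * u ^ 2 * (g * (2 * x - Real.sqrt 2 * ρ)) := by
      exact mul_nonneg (by positivity) (mul_nonneg hg.le hDpos.le)
    have hsq : (τ * c₃ * (n:ℝ) * u ^ 2 * (g * (2 * x - Real.sqrt 2 * ρ))) ^ 2
        ≤ (2 * c₁ * m * ((e * u) * ((1 + 2 * x) * (x - (θ + ρ))))) ^ 2 :=
      pow_le_pow_left₀ hkey0 hkey 2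
    have hcore := core_poly x θ ρ hx1 hθ0 hρ0 hθρx
    have hfinal' : ((1 + θ * ρ) * (τ ^ 2 * c₃ ^ 2 * (n:ℝ) * g ^ 2 * u ^ 2))
          * (((n:ℝ) * u ^ 2) * (2 * x - Real.sqrt 2 * ρ) ^ 2)
        ≤ (9 * x ^ 2 * (2 + x ^ 2) * c₁ ^ 2 * (s:ℝ))
          * (((n:ℝ) * u ^ 2) * (2 * x - Real.sqrt 2 * ρ) ^ 2) := by
      calc ((1 + θ * ρ) * (τ ^ 2 * c₃ ^ 2 * (n:ℝ) * g ^ 2 * u ^ 2))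
            * (((n:ℝ) * u ^ 2) * (2 * x - Real.sqrt 2 * ρ) ^ 2)
          = (1 + θ * ρ) * ((τ * c₃ * (n:ℝ) * u ^ 2 * (g * (2 * x - Real.sqrt 2 * ρ))) ^ 2) := by
            ring
        _ ≤ (1 + θ * ρ) * ((2 * c₁ * m * ((e * u) * ((1 + 2 * x) * (x - (θ + ρ))))) ^ 2) :=
            mul_le_mul_of_nonneg_left hsq (by positivity)
        _ = (c₁ ^ 2 * ((n:ℝ) * ((s:ℝ) * u ^ 2)) / 4)
              * (16 * (1 + θ * ρ) * (1 + 2 * x) ^ 2 * (x - (θ + ρ)) ^ 2) := by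
            rw [← hm2, ← he2]; ring
        _ ≤ (c₁ ^ 2 * ((n:ℝ) * ((s:ℝ) * u ^ 2)) / 4)
              * (36 * x ^ 2 * (2 + x ^ 2) * (2 * x - Real.sqrt 2 * ρ) ^ 2) :=
            mul_le_mul_of_nonneg_left hcore (by positivity)
        _ = (9 * x ^ 2 * (2 + x ^ 2) * c₁ ^ 2 * (s:ℝ))
              * (((n:ℝ) * u ^ 2) * (2 * x - Real.sqrt 2 * ρ) ^ 2) := by ring
    have hDpos' : 0 < ((n:ℝ) * u ^ 2) * (2 * x - Real.sqrt 2 * ρ) ^ 2 := by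
      have hn' : (0:ℝ) < n := by exact_mod_cast hn
      exact mul_pos (mul_pos hn' (by positivity)) (pow_pos hDpos 2)
    have hTGT : (1 + θ * ρ) * (τ ^ 2 * c₃ ^ 2 * (n:ℝ) * g ^ 2 * u ^ 2)
        ≤ 9 * x ^ 2 * (2 + x ^ 2) * c₁ ^ 2 * (s:ℝ) :=
      le_of_mul_le_mul_right hfinal' hDpos'
    -- conclude
    have hUR : U + R ≤ (1 + θ * ρ) * u ^ 2 := by
      rw [← hu2]
      have e5 : (1 + θ * ρ) * u ^ 2 = u ^ 2 + θ * ρ * u ^ 2 := by ring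
      rw [e5]
      linarith [hRb]
    have hden : (0:ℝ) < τ ^ 2 * c₃ ^ 2 * (n:ℝ) * g ^ 2 := by
      have hn' : (0:ℝ) < n := by exact_mod_cast hn
      positivity
    have hfin : U + R ≤ 9 * x ^ 2 * (2 + x ^ 2) * c₁ ^ 2 * (s:ℝ) / (τ ^ 2 * c₃ ^ 2 * (n:ℝ) * g ^ 2) := by
      rw [le_div_iff₀ hden]
      calc (U + R) * (τ ^ 2 * c₃ ^ 2 * (n:ℝ) * g ^ 2)
          ≤ ((1 + θ * ρ) * u ^ 2) * (τ ^ 2 * c₃ ^ 2 * (n:ℝ) * g ^ 2) :=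
            mul_le_mul_of_nonneg_right hUR hden.le
        _ = (1 + θ * ρ) * (τ ^ 2 * c₃ ^ 2 * (n:ℝ) * g ^ 2 * u ^ 2) := by ring
        _ ≤ _ := hTGT
    have hKeq : (3 * (2 + 1 / τ) * Real.sqrt (2 + (1 + 2 * τ) ^ 2) * c₁ / (g * c₃)) ^ 2
          * ((s:ℝ) / (n:ℝ))
        = 9 * x ^ 2 * (2 + x ^ 2) * c₁ ^ 2 * (s:ℝ) / (τ ^ 2 * c₃ ^ 2 * (n:ℝ) * g ^ 2) := by
      have hsq2 : (Real.sqrt (2 + (1 + 2 * τ) ^ 2)) ^ 2 = 2 + (1 + 2 * τ) ^ 2 :=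
        Real.sq_sqrt (by positivity)
      have hn' : (0:ℝ) < n := by exact_mod_cast hn
      rw [hxdef, div_pow, mul_pow, mul_pow, mul_pow, hsq2]
      field_simp
      ring
    rw [hsum_sq]
    have h1 : U + R ≤ (3 * (2 + 1 / τ) * Real.sqrt (2 + (1 + 2 * τ) ^ 2) * c₁ / (g * c₃)) ^ 2
        * ((s:ℝ) / (n:ℝ)) := by rw [hKeq]; exact hfin
    calc Real.sqrt (U + R)
        ≤ Real.sqrt ((3 * (2 + 1 / τ) * Real.sqrt (2 + (1 + 2 * τ) ^ 2) * c₁ / (g * c₃)) ^ 2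
            * ((s:ℝ) / (n:ℝ))) := Real.sqrt_le_sqrt h1
      _ = (3 * (2 + 1 / τ) * Real.sqrt (2 + (1 + 2 * τ) ^ 2) * c₁ / (g * c₃))
            * Real.sqrt ((s:ℝ) / (n:ℝ)) := by
          rw [Real.sqrt_mul (sq_nonneg _), Real.sqrt_sq hK0]
end

section
/- Let f be continuous on the closed disc Δ₀ = {z ∈ ℂ : |z| ≤ R₀} and analytic on its interior, let 0 < r < R₀, and let ξ be a real random variable with |ξ| ≤ r almost surely. Then g(z) := E[f(z + ξ)] is well-defined and analytic on Δ = {z ∈ ℂ : |z| < R₀ − r}, with power series g(z) = Σ_{k≥0} E[f^{(k)}(ξ)] z^k / k! convergent on Δ. -/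
open MeasureTheory Metric

/-- Cauchy estimate: if `f` is bounded by `M` on `closedBall 0 R₀` and differentiable on the
open ball, then for `‖w‖ ≤ r` and `0 < ρ` with `r + ρ < R₀` we have
`‖f⁽ᵏ⁾(w)‖ ≤ k! * M * ρ⁻ᵏ`. -/
lemma aux_cauchy_est {f : ℂ → ℂ} {R₀ r ρ : ℝ} (hρ : 0 < ρ) (hρr : r + ρ < R₀)
    (hfc : ContinuousOn f (Metric.closedBall 0 R₀))
    (hfa : DifferentiableOn ℂ f (Metric.ball 0 R₀))
    {M : ℝ} (hM : ∀ x ∈ Metric.closedBall (0:ℂ) R₀, ‖f x‖ ≤ M)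
    {w : ℂ} (hw : ‖w‖ ≤ r) (k : ℕ) :
    ‖iteratedDeriv k f w‖ ≤ k.factorial * (M * ρ⁻¹ ^ k) := by
  set ρn : NNReal := ⟨ρ, hρ.le⟩ with hρn
  have hcoe : (ρn : ℝ) = ρ := rfl
  have hsub : Metric.closedBall w (ρn : ℝ) ⊆ Metric.ball (0:ℂ) R₀ := by
    intro x hx
    rw [Metric.mem_closedBall] at hx
    rw [Metric.mem_ball]
    calc dist x 0 ≤ dist x w + dist w 0 := dist_triangle _ _ _
    _ ≤ ρ + r := by
        rw [dist_zero_right]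
        exact add_le_add (hcoe ▸ hx) hw
    _ < R₀ := by linarith
  have hd : DifferentiableOn ℂ f (Metric.closedBall w ρn) := hfa.mono hsub
  have hp : HasFPowerSeriesOnBall f (cauchyPowerSeries f w ρn) w ρn :=
    hd.hasFPowerSeriesOnBall (by exact_mod_cast hρ)
  have h1 : iteratedDeriv k f w = k.factorial • (cauchyPowerSeries f w ρn k fun _ => (1:ℂ)) := by
    rw [iteratedDeriv_eq_iteratedFDeriv, ← hp.factorial_smul]
  have h2 : ‖cauchyPowerSeries f w ρn k fun _ => (1:ℂ)‖ ≤ ‖cauchyPowerSeries f w (ρn:ℝ) k‖ := by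
    refine le_trans (ContinuousMultilinearMap.le_opNorm _ _) ?_
    simp
  have hMint : ((2 * Real.pi)⁻¹ * ∫ θ : ℝ in (0)..2 * Real.pi,
      ‖f (circleMap w ρn θ)‖) ≤ M := by
    have hmem : ∀ θ : ℝ, circleMap w ρn θ ∈ Metric.closedBall (0:ℂ) R₀ := by
      intro θ
      rw [Metric.mem_closedBall]
      calc dist (circleMap w ρn θ) 0 ≤ dist (circleMap w ρn θ) w + dist w 0 := dist_triangle _ _ _
      _ ≤ ρ + r := by
          rw [dist_zero_right]
          have := circleMap_mem_sphere' w (ρn:ℝ) θ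
          rw [Metric.mem_sphere] at this
          rw [this]
          exact add_le_add (le_of_eq (by rw [hcoe, abs_of_pos hρ])) hw
      _ ≤ R₀ := by linarith
    have hcont : Continuous fun θ : ℝ => ‖f (circleMap w ρn θ)‖ := by
      refine Continuous.norm ?_
      exact hfc.comp_continuous (continuous_circleMap _ _) hmem
    have hle : (∫ θ : ℝ in (0)..2 * Real.pi, ‖f (circleMap w ρn θ)‖) ≤
        ∫ _ : ℝ in (0)..2 * Real.pi, M := by
      apply intervalIntegral.integral_mono_on Real.two_pi_pos.le
        (hcont.intervalIntegrable _ _) intervalIntegrable_const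
      intro θ _
      exact hM _ (hmem θ)
    rw [intervalIntegral.integral_const, smul_eq_mul, sub_zero] at hle
    rw [inv_mul_le_iff₀ Real.two_pi_pos]
    linarith
  have h3 : ‖cauchyPowerSeries f w (ρn:ℝ) k‖ ≤ M * ρ⁻¹ ^ k := by
    refine le_trans (norm_cauchyPowerSeries_le f w (ρn:ℝ) k) ?_
    rw [hcoe, abs_of_pos hρ]
    have : (0:ℝ) ≤ ρ⁻¹ ^ k := by positivity
    exact mul_le_mul_of_nonneg_right hMint this
  rw [h1]
  rw [nsmul_eq_mul, norm_mul, Complex.norm_natCast]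
  exact mul_le_mul_of_nonneg_left (le_trans h2 h3) (by positivity)


/-- Proposition 3.1 (1): `g(z) = E[f(z+ξ)]` is well-defined and analytic on
`{|z| < R₀ − r}`, with power series `g(z) = Σ E[f⁽ᵏ⁾(ξ)] zᵏ/k!`. -/
theorem stmt13 {Ω : Type*} [MeasurableSpace Ω] (ℙ : Measure Ω) [IsProbabilityMeasure ℙ]
    (f : ℂ → ℂ) (R₀ r : ℝ) (hr : 0 < r) (hrR : r < R₀)
    (hfc : ContinuousOn f (Metric.closedBall 0 R₀))
    (hfa : DifferentiableOn ℂ f (Metric.ball 0 R₀))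
    (ξ : Ω → ℝ) (hξm : Measurable ξ) (hξ : ∀ᵐ ω ∂ℙ, |ξ ω| ≤ r) :
    (∀ z ∈ Metric.ball (0 : ℂ) (R₀ - r), Integrable (fun ω => f (z + ξ ω)) ℙ) ∧
    AnalyticOnNhd ℂ (fun z => ∫ ω, f (z + ξ ω) ∂ℙ) (Metric.ball 0 (R₀ - r)) ∧
    (∀ z ∈ Metric.ball (0 : ℂ) (R₀ - r),
      HasSum (fun k : ℕ => (∫ ω, iteratedDeriv k f (ξ ω) ∂ℙ) * z ^ k / (k.factorial : ℂ))
        (∫ ω, f (z + ξ ω) ∂ℙ)) := by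
  -- the truncated random variable, always in `[-r, r]`
  set ι : Ω → ℝ := fun ω => max (-r) (min r (ξ ω)) with hι
  have hιm : Measurable ι := measurable_const.max (measurable_const.min hξm)
  have hιr : ∀ ω, |ι ω| ≤ r := by
    intro ω
    rw [abs_le]
    constructor
    · exact le_max_left _ _
    · exact max_le (by linarith) (min_le_left _ _)
  have hιξ : ∀ᵐ ω ∂ℙ, ι ω = ξ ω := by
    filter_upwards [hξ] with ω hω
    rw [abs_le] at hω
    show max (-r) (min r (ξ ω)) = ξ ω
    rw [min_eq_right hω.2, max_eq_right hω.1]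
  -- sup bound on `f`
  obtain ⟨M, hM⟩ : ∃ M, ∀ x ∈ Metric.closedBall (0:ℂ) R₀, ‖f x‖ ≤ M :=
    (isCompact_closedBall 0 R₀).exists_bound_of_continuousOn hfc
  have hM0 : 0 ≤ M :=
    (norm_nonneg _).trans (hM 0 (Metric.mem_closedBall_self (by linarith)))
  -- continuity of iterated derivatives on the open ball
  have hAn : ∀ k : ℕ, AnalyticOnNhd ℂ (iteratedDeriv k f) (Metric.ball (0:ℂ) R₀) := by
    intro k
    induction k with
    | zero => simpa using hfa.analyticOnNhd isOpen_ball
    | succ n ih => rw [iteratedDeriv_succ]; exact ih.deriv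
  -- integrability / measurability toolkit
  have hInt : ∀ g : ℂ → ℂ, ContinuousOn g (Metric.ball (0:ℂ) R₀) → ∀ c : ℂ, ‖c‖ < R₀ - r →
      Integrable (fun ω => g (c + ι ω)) ℙ := by
    intro g hg c hc
    have hmem : ∀ ω, c + (ι ω : ℂ) ∈ Metric.closedBall (0:ℂ) (‖c‖ + r) := by
      intro ω
      rw [Metric.mem_closedBall, dist_zero_right]
      refine (norm_add_le _ _).trans (add_le_add (le_refl _) ?_)
      rw [Complex.norm_real, Real.norm_eq_abs]
      exact hιr ω
    have hsub : Metric.closedBall (0:ℂ) (‖c‖ + r) ⊆ Metric.ball (0:ℂ) R₀ := by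
      apply Metric.closedBall_subset_ball
      linarith
    obtain ⟨C, hC⟩ : ∃ C, ∀ x ∈ Metric.closedBall (0:ℂ) (‖c‖ + r), ‖g x‖ ≤ C :=
      (isCompact_closedBall 0 _).exists_bound_of_continuousOn (hg.mono hsub)
    have hmeas : AEStronglyMeasurable (fun ω => g (c + ι ω)) ℙ := by
      have hmk : Measurable (fun ω => (⟨ι ω, Set.mem_Icc.mpr (abs_le.mp (hιr ω))⟩ :
          Set.Icc (-r) r)) := hιm.subtype_mk
      have hcont : Continuous (fun x : Set.Icc (-r) r => g (c + (x : ℝ))) := by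
        refine hg.comp_continuous ?_ ?_
        · exact continuous_const.add (Complex.continuous_ofReal.comp continuous_subtype_val)
        · intro x
          exact hsub (by
            rw [Metric.mem_closedBall, dist_zero_right]
            refine (norm_add_le _ _).trans (add_le_add (le_refl _) ?_)
            rw [Complex.norm_real, Real.norm_eq_abs]
            exact abs_le.mpr (Set.mem_Icc.mp x.2))
      exact ((hcont.measurable.comp hmk).aestronglyMeasurable)
    refine (integrable_const C).mono' hmeas ?_
    filter_upwards with ω
    exact hC _ (hmem ω)
  -- the key pointwise Taylor expansion
  have hTay : ∀ (z : ℂ), ‖z‖ < R₀ - r → ∀ ω,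
      HasSum (fun k : ℕ => iteratedDeriv k f (ι ω) * z ^ k / (k.factorial : ℂ))
        (f (z + ι ω)) := by
    intro z hz ω
    have h1 : DifferentiableOn ℂ f (Metric.ball ((ι ω : ℝ) : ℂ) (R₀ - r)) := by
      refine hfa.mono ?_
      intro x hx
      rw [Metric.mem_ball] at hx ⊢
      calc dist x 0 ≤ dist x (ι ω : ℂ) + dist ((ι ω : ℝ) : ℂ) 0 := dist_triangle _ _ _
      _ < (R₀ - r) + r := by
          refine add_lt_add_of_lt_of_le hx ?_
          rw [dist_zero_right, Complex.norm_real, Real.norm_eq_abs]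
          exact hιr ω
      _ = R₀ := by ring
    have h2 : z + (ι ω : ℂ) ∈ Metric.ball ((ι ω : ℝ) : ℂ) (R₀ - r) := by
      rw [Metric.mem_ball, dist_eq_norm]
      simpa using hz
    have H := Complex.hasSum_taylorSeries_on_ball h1 h2
    have heq : (fun k : ℕ => iteratedDeriv k f (ι ω) * z ^ k / (k.factorial : ℂ)) =
        fun k : ℕ => (k.factorial : ℂ)⁻¹ • (z + (ι ω : ℂ) - (ι ω : ℂ)) ^ k •
          iteratedDeriv k f (ι ω) := by
      funext k
      simp only [add_sub_cancel_right, smul_eq_mul]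
      ring
    rw [heq]
    exact H
  -- the key swap of sum and integral
  have hKey : ∀ (z : ℂ), ‖z‖ < R₀ - r →
      HasSum (fun k : ℕ => (∫ ω, iteratedDeriv k f (ι ω) ∂ℙ) * z ^ k / (k.factorial : ℂ))
        (∫ ω, f (z + ι ω) ∂ℙ) := by
    intro z hz
    set ρ : ℝ := (‖z‖ + (R₀ - r)) / 2 with hρdef
    have hρ0 : 0 < ρ := by rw [hρdef]; have := norm_nonneg z; linarith
    have hzρ : ‖z‖ < ρ := by rw [hρdef]; linarith
    have hρR : r + ρ < R₀ := by rw [hρdef]; linarith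
    have hCau : ∀ ω, ∀ k : ℕ, ‖iteratedDeriv k f ((ι ω : ℝ) : ℂ)‖ ≤
        k.factorial * (M * ρ⁻¹ ^ k) := by
      intro ω k
      refine aux_cauchy_est hρ0 hρR hfc hfa hM ?_ k
      rw [Complex.norm_real, Real.norm_eq_abs]; exact hιr ω
    have hF_int : ∀ k : ℕ, Integrable
        (fun ω => iteratedDeriv k f (ι ω) * z ^ k / (k.factorial : ℂ)) ℙ := by
      intro k
      have := hInt (iteratedDeriv k f) (hAn k).continuousOn 0 (by simpa using (by linarith : (0:ℝ) < R₀ - r))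
      simp only [zero_add] at this
      exact (this.mul_const _).div_const _
    have hF_sum : Summable (fun k : ℕ =>
        ∫ ω, ‖iteratedDeriv k f (ι ω) * z ^ k / (k.factorial : ℂ)‖ ∂ℙ) := by
      have hgsum : Summable (fun k : ℕ => M * (‖z‖ / ρ) ^ k) := by
        refine Summable.mul_left M (summable_geometric_of_lt_one (div_nonneg (norm_nonneg _) hρ0.le) ?_)
        rw [div_lt_one hρ0]; exact hzρ
      refine Summable.of_nonneg_of_le (fun k => integral_nonneg fun ω => norm_nonneg _)
        (fun k => ?_) hgsum
      have hbd : ∀ ω, ‖iteratedDeriv k f (ι ω) * z ^ k / (k.factorial : ℂ)‖ ≤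
          M * (‖z‖ / ρ) ^ k := by
        intro ω
        rw [norm_div, norm_mul, norm_pow, Complex.norm_natCast]
        rw [div_le_iff₀ (by positivity : (0:ℝ) < (k.factorial : ℝ))]
        calc ‖iteratedDeriv k f (ι ω)‖ * ‖z‖ ^ k
            ≤ (k.factorial * (M * ρ⁻¹ ^ k)) * ‖z‖ ^ k :=
              mul_le_mul_of_nonneg_right (hCau ω k) (by positivity)
        _ = M * (‖z‖ / ρ) ^ k * k.factorial := by
              rw [div_pow]
              ring
      calc (∫ ω, ‖iteratedDeriv k f (ι ω) * z ^ k / (k.factorial : ℂ)‖ ∂ℙ)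
          ≤ ∫ _, M * (‖z‖ / ρ) ^ k ∂ℙ :=
            integral_mono (hF_int k).norm (integrable_const _) hbd
      _ = M * (‖z‖ / ρ) ^ k := by simp
    have H := MeasureTheory.hasSum_integral_of_summable_integral_norm hF_int hF_sum
    have h2 : (∫ ω, (∑' k : ℕ, iteratedDeriv k f (ι ω) * z ^ k / (k.factorial : ℂ)) ∂ℙ)
        = ∫ ω, f (z + ι ω) ∂ℙ := by
      refine integral_congr_ae ?_
      filter_upwards with ω
      exact (hTay z hz ω).tsum_eq
    rw [h2] at H
    have H' : HasSum (fun k : ℕ => ∫ ω, iteratedDeriv k f (ι ω) * z ^ k / (k.factorial : ℂ) ∂ℙ)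
        (∫ ω, f (z + ι ω) ∂ℙ) := H
    convert H' using 2 with k
    rw [mul_div_assoc, ← integral_mul_const]
    simp_rw [mul_div_assoc]
  -- replace ι by ξ almost everywhere in the two integrals
  have hIcongr : ∀ g : ℂ → ℂ, ∀ c : ℂ,
      (∫ ω, g (c + ι ω) ∂ℙ) = ∫ ω, g (c + ξ ω) ∂ℙ := by
    intro g c
    refine integral_congr_ae ?_
    filter_upwards [hιξ] with ω hω
    rw [hω]
  have hKey' : ∀ z ∈ Metric.ball (0:ℂ) (R₀ - r),
      HasSum (fun k : ℕ => (∫ ω, iteratedDeriv k f (ξ ω) ∂ℙ) * z ^ k / (k.factorial : ℂ))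
        (∫ ω, f (z + ξ ω) ∂ℙ) := by
    intro z hz
    rw [mem_ball_zero_iff] at hz
    have H := hKey z hz
    rw [hIcongr f z] at H
    convert H using 2 with k
    have hck : (∫ ω, iteratedDeriv k f (ξ ω) ∂ℙ) = ∫ ω, iteratedDeriv k f (ι ω) ∂ℙ := by
      refine integral_congr_ae ?_
      filter_upwards [hιξ] with ω hω
      rw [hω]
    rw [hck]
  refine ⟨?_, ?_, hKey'⟩
  · intro z hz
    rw [mem_ball_zero_iff] at hz
    refine (hInt f (hfa.analyticOnNhd isOpen_ball).continuousOn z hz).congr ?_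
    filter_upwards [hιξ] with ω hω
    rw [hω]
  · -- analyticity via the power series
    set a : ℕ → ℂ := fun k => (∫ ω, iteratedDeriv k f (ξ ω) ∂ℙ) / (k.factorial : ℂ) with ha
    set p : FormalMultilinearSeries ℂ ℂ ℂ := FormalMultilinearSeries.ofScalars ℂ a with hp
    have hnorm_a : ∀ (ρ : ℝ), 0 < ρ → r + ρ < R₀ → ∀ k : ℕ, ‖a k‖ ≤ M * ρ⁻¹ ^ k := by
      intro ρ hρ0 hρR k
      rw [ha]
      have h1 : ‖∫ ω, iteratedDeriv k f (ξ ω) ∂ℙ‖ ≤ k.factorial * (M * ρ⁻¹ ^ k) := by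
        have hb : ∀ᵐ ω ∂ℙ, ‖iteratedDeriv k f (ξ ω)‖ ≤ (k.factorial : ℝ) * (M * ρ⁻¹ ^ k) := by
          filter_upwards [hξ] with ω hω
          exact aux_cauchy_est hρ0 hρR hfc hfa hM
            (by rw [Complex.norm_real, Real.norm_eq_abs]; exact hω) k
        have := norm_integral_le_of_norm_le
          (integrable_const ((k.factorial : ℝ) * (M * ρ⁻¹ ^ k))) hb
        simpa using this
      simp only [norm_div, Complex.norm_natCast]
      rw [div_le_iff₀ (by positivity : (0:ℝ) < (k.factorial : ℝ))]
      calc ‖∫ ω, iteratedDeriv k f (ξ ω) ∂ℙ‖ ≤ k.factorial * (M * ρ⁻¹ ^ k) := h1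
      _ = M * ρ⁻¹ ^ k * k.factorial := by ring
    have hr_le : ENNReal.ofReal (R₀ - r) ≤ p.radius := by
      refine ENNReal.le_of_forall_nnreal_lt fun q hq => ?_
      have hq' : (q : ℝ) < R₀ - r := by
        rw [← ENNReal.ofReal_coe_nnreal] at hq
        exact_mod_cast (ENNReal.ofReal_lt_ofReal_iff (by linarith)).mp hq
      rcases eq_or_ne q 0 with rfl | hne
      · simp
      have h0 : (0:ℝ) < (q:ℝ) := by exact_mod_cast zero_lt_iff.mpr hne
      refine p.le_radius_of_bound M fun k => ?_
      have hnp : ‖p k‖ = ‖a k‖ := FormalMultilinearSeries.ofScalars_norm ℂ a k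
      rw [hnp]
      calc ‖a k‖ * (q:ℝ) ^ k ≤ (M * (q:ℝ)⁻¹ ^ k) * (q:ℝ) ^ k := by
            refine mul_le_mul_of_nonneg_right (hnorm_a q h0 (by linarith) k) (by positivity)
      _ = M := by
            rw [mul_assoc, ← mul_pow, inv_mul_cancel₀ (ne_of_gt h0), one_pow, mul_one]
    have hFP : HasFPowerSeriesOnBall (fun z => ∫ ω, f (z + ξ ω) ∂ℙ) p 0
        (ENNReal.ofReal (R₀ - r)) := by
      refine ⟨hr_le, by simp; linarith, fun {y} hy => ?_⟩
      have hy' : ‖y‖ < R₀ - r := by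
        rw [EMetric.mem_ball, edist_lt_ofReal, dist_zero_right] at hy
        exact hy
      have H := hKey' y (mem_ball_zero_iff.mpr hy')
      rw [zero_add]
      have heq : (fun n : ℕ => p n fun _ => y) =
          fun k : ℕ => (∫ ω, iteratedDeriv k f (ξ ω) ∂ℙ) * y ^ k / (k.factorial : ℂ) := by
        funext k
        rw [hp, FormalMultilinearSeries.ofScalars_apply_eq, ha, smul_eq_mul]
        ring
      rw [heq]
      exact H
    intro z hz
    rw [mem_ball_zero_iff] at hz
    exact hFP.analyticAt_of_mem (by
      rw [EMetric.mem_ball, edist_lt_ofReal, dist_zero_right]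
      exact hz)
end
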